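/- arXiv:1804.08921 — 7 statements merged into one kernel-verified Lean document; each statement's English description precedes it below -/
import Mathlib

section
/- Summing the double series first over n: for complex numbers q, x_1,…,x_M, y_1,…,y_N, a_1,…,a_M, b_1,…,b_N with |q| < 1, |x_i| < 1 and |y_j| < 1 for all i, j, such that (b_j y_j ; q)_n ≠ 0 for all j and all n ∈ ℕ, (y_j ; q)_∞ ≠ 0 for all j, and such that the doubly-indexed family (m,n) ∈ ℕ^M × ℕ^N ↦ ∏_{i=1}^M ((a_i;q)_{m_i}/(q;q)_{m_i}) x_i^{m_i} · ∏_{j=1}^N ((b_j;q)_{n_j}/(q;q)_{n_j}) y_j^{n_j} · q^{|m||n|} is absolutely summable, its sum S equals ∏_{j=1}^N ((b_j y_j;q)_∞/(y_j;q)_∞) · F_{N,M}({y_j},{a_i};{b_j y_j};{x_i}), where in this F the upper parameters are y_1,…,y_N, the b-type parameters are a_1,…,a_M, the lower parameters are b_1 y_1,…,b_N y_N, and the variables are x_1,…,x_M. -/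
noncomputable def qPoch (q a : ℂ) (n : ℕ) : ℂ :=
  ∏ k ∈ Finset.range n, (1 - q ^ k * a)

noncomputable def qPochInf (q a : ℂ) : ℂ :=
  ∏' k : ℕ, (1 - q ^ k * a)

noncomputable def qCoef (q a : ℂ) (n : ℕ) : ℂ := qPoch q a n / qPoch q q n

lemma exp_le_one_sub {t r : ℝ} (ht : 0 ≤ t) (htr : t ≤ r) (hr : r < 1) :
    Real.exp (-(t / (1 - r))) ≤ 1 - t := by
  have h1r : 0 < 1 - r := by linarith
  have h1t : 0 < 1 - t := by linarith
  have hexp : t / (1 - r) + 1 ≤ Real.exp (t / (1 - r)) := Real.add_one_le_exp _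
  have hkey : 1 ≤ (1 - t) * (t / (1 - r) + 1) := by
    rw [← sub_nonneg]
    have : (1 - t) * (t / (1 - r) + 1) - 1 = (t * (r - t)) / (1 - r) := by
      field_simp; ring
    rw [this]
    exact div_nonneg (mul_nonneg ht (by linarith)) h1r.le
  rw [Real.exp_neg]
  have hpos : 0 < t / (1 - r) + 1 := by positivity
  refine (inv_anti₀ hpos hexp).trans ?_
  rw [inv_le_comm₀ hpos h1t]
  have hc : (1 - t) * (1 - t)⁻¹ = 1 := mul_inv_cancel₀ h1t.ne'
  nlinarith [inv_pos.mpr h1t]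

open Finset in
lemma sum_geom_le {r : ℝ} (h0 : 0 ≤ r) (h1 : r < 1) (n : ℕ) :
    ∑ k ∈ range n, r ^ k ≤ (1 - r)⁻¹ := by
  have := Summable.sum_le_tsum (range n) (fun i _ => by positivity)
    (summable_geometric_of_lt_one h0 h1)
  rwa [tsum_geometric_of_lt_one h0 h1] at this

open Finset in
lemma qPoch_norm_le {q : ℂ} (a : ℂ) (hq : ‖q‖ < 1) (n : ℕ) :
    ‖qPoch q a n‖ ≤ Real.exp (‖a‖ / (1 - ‖q‖)) := by
  have h1q : 0 < 1 - ‖q‖ := by linarith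
  rw [qPoch, norm_prod]
  calc ∏ k ∈ range n, ‖1 - q ^ k * a‖
      ≤ ∏ k ∈ range n, Real.exp (‖q‖ ^ k * ‖a‖) := by
        refine prod_le_prod (fun k _ => norm_nonneg _) (fun k _ => ?_)
        refine (norm_sub_le _ _).trans ?_
        rw [norm_one, norm_mul, norm_pow]
        linarith [Real.add_one_le_exp (‖q‖ ^ k * ‖a‖)]
    _ = Real.exp (∑ k ∈ range n, ‖q‖ ^ k * ‖a‖) := (Real.exp_sum _ _).symm
    _ ≤ Real.exp (‖a‖ / (1 - ‖q‖)) := by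
        apply Real.exp_le_exp.mpr
        rw [← sum_mul, div_eq_inv_mul, mul_comm ((1 - ‖q‖)⁻¹) ‖a‖, mul_comm]
        exact mul_le_mul_of_nonneg_left (sum_geom_le (norm_nonneg q) hq n)
          (norm_nonneg a)

open Finset in
lemma qPoch_q_norm_ge {q : ℂ} (hq : ‖q‖ < 1) (n : ℕ) :
    Real.exp (-(‖q‖ / (1 - ‖q‖) ^ 2)) ≤ ‖qPoch q q n‖ := by
  have h1q : 0 < 1 - ‖q‖ := by linarith
  have h0q : 0 ≤ ‖q‖ := norm_nonneg q
  rw [qPoch, norm_prod]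
  calc Real.exp (-(‖q‖ / (1 - ‖q‖) ^ 2))
      ≤ Real.exp (-(∑ k ∈ range n, ‖q‖ ^ (k + 1) / (1 - ‖q‖))) := by
        apply Real.exp_le_exp.mpr
        rw [neg_le_neg_iff]
        calc ∑ k ∈ range n, ‖q‖ ^ (k + 1) / (1 - ‖q‖)
            = (∑ k ∈ range n, ‖q‖ ^ k) * (‖q‖ / (1 - ‖q‖)) := by
              rw [sum_mul]; exact sum_congr rfl fun k _ => by rw [pow_succ]; ring
          _ ≤ (1 - ‖q‖)⁻¹ * (‖q‖ / (1 - ‖q‖)) :=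
              mul_le_mul_of_nonneg_right (sum_geom_le h0q hq n) (by positivity)
          _ = ‖q‖ / (1 - ‖q‖) ^ 2 := by field_simp
    _ = ∏ k ∈ range n, Real.exp (-(‖q‖ ^ (k + 1) / (1 - ‖q‖))) := by
        rw [← Real.exp_sum, ← Finset.sum_neg_distrib]
    _ ≤ ∏ k ∈ range n, ‖1 - q ^ k * q‖ := by
        refine prod_le_prod (fun k _ => (Real.exp_pos _).le) (fun k _ => ?_)
        have hb : ‖q‖ ^ (k + 1) ≤ ‖q‖ := by
          calc ‖q‖ ^ (k + 1) ≤ ‖q‖ ^ 1 := pow_le_pow_of_le_one h0q hq.le (by omega)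
            _ = ‖q‖ := pow_one _
        refine (exp_le_one_sub (by positivity) hb hq).trans ?_
        have : ‖q ^ k * q‖ = ‖q‖ ^ (k + 1) := by
          rw [norm_mul, norm_pow, pow_succ]
        calc 1 - ‖q‖ ^ (k + 1) = ‖(1 : ℂ)‖ - ‖q ^ k * q‖ := by rw [norm_one, this]
          _ ≤ ‖1 - q ^ k * q‖ := norm_sub_norm_le _ _

lemma qPoch_q_ne_zero {q : ℂ} (hq : ‖q‖ < 1) (n : ℕ) : qPoch q q n ≠ 0 := by
  intro h
  have := qPoch_q_norm_ge hq n
  rw [h, norm_zero] at this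
  exact absurd this (not_le.mpr (Real.exp_pos _))

noncomputable def qCoefBound (q a : ℂ) : ℝ :=
  Real.exp (‖a‖ / (1 - ‖q‖) + ‖q‖ / (1 - ‖q‖) ^ 2)

lemma qCoef_norm_le {q : ℂ} (a : ℂ) (hq : ‖q‖ < 1) (n : ℕ) :
    ‖qCoef q a n‖ ≤ qCoefBound q a := by
  have hd := qPoch_q_norm_ge hq n
  have hdpos : (0:ℝ) < Real.exp (-(‖q‖ / (1 - ‖q‖) ^ 2)) := Real.exp_pos _
  simp only [qCoef]
  rw [norm_div]
  calc ‖qPoch q a n‖ / ‖qPoch q q n‖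
      ≤ Real.exp (‖a‖ / (1 - ‖q‖)) / Real.exp (-(‖q‖ / (1 - ‖q‖) ^ 2)) :=
        div_le_div₀ (Real.exp_pos _).le (qPoch_norm_le a hq n) hdpos hd
    _ = qCoefBound q a := by rw [← Real.exp_sub, qCoefBound, sub_neg_eq_add]

open Filter Topology

noncomputable def hseries (q a z : ℂ) : ℂ :=
  ∑' n : ℕ, qCoef q a n * z ^ n

lemma qCoef_summable {q z : ℂ} (a : ℂ) (hq : ‖q‖ < 1) (hz : ‖z‖ < 1) :
    Summable (fun n : ℕ => ‖qCoef q a n * z ^ n‖) :=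
  Summable.of_nonneg_of_le (fun _ => norm_nonneg _)
    (fun n => by
      rw [norm_mul, norm_pow]
      exact mul_le_mul_of_nonneg_right (qCoef_norm_le a hq n) (by positivity))
    ((summable_geometric_of_lt_one (norm_nonneg z) hz).mul_left _)

lemma qCoefBound_nonneg (q a : ℂ) : 0 ≤ qCoefBound q a := (Real.exp_pos _).le

lemma qPoch_zero (q a : ℂ) : qPoch q a 0 = 1 := by simp [qPoch]

lemma qCoef_zero (q a : ℂ) : qCoef q a 0 = 1 := by simp [qCoef, qPoch_zero]

lemma hseries_sub_one_norm {q z : ℂ} (a : ℂ) (hq : ‖q‖ < 1) (hz : ‖z‖ < 1)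
    {w : ℂ} (hw : ‖w‖ ≤ ‖z‖) :
    ‖hseries q a w - 1‖ ≤ qCoefBound q a * (1 - ‖z‖)⁻¹ * ‖w‖ := by
  have hw1 : ‖w‖ < 1 := lt_of_le_of_lt hw hz
  have hS : Summable (fun n : ℕ => qCoef q a n * w ^ n) :=
    (qCoef_summable a hq hw1).of_norm
  have h0 : hseries q a w = 1 + ∑' n : ℕ, qCoef q a (n + 1) * w ^ (n + 1) := by
    rw [hseries, Summable.tsum_eq_zero_add hS, qCoef_zero, pow_zero, mul_one]
  rw [h0, add_sub_cancel_left]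
  have hS' : Summable (fun n : ℕ => ‖qCoef q a (n + 1) * w ^ (n + 1)‖) :=
    (summable_nat_add_iff 1).2 (qCoef_summable a hq hw1)
  refine (norm_tsum_le_tsum_norm hS').trans ?_
  have hSg : Summable (fun n : ℕ => qCoefBound q a * ‖w‖ * ‖w‖ ^ n) :=
    (summable_geometric_of_lt_one (norm_nonneg w) hw1).mul_left _
  refine (Summable.tsum_le_tsum (fun n => ?_) hS' hSg).trans ?_
  · rw [norm_mul, norm_pow, pow_succ]
    calc ‖qCoef q a (n + 1)‖ * (‖w‖ ^ n * ‖w‖)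
        ≤ qCoefBound q a * (‖w‖ ^ n * ‖w‖) :=
          mul_le_mul_of_nonneg_right (qCoef_norm_le a hq _) (by positivity)
      _ = qCoefBound q a * ‖w‖ * ‖w‖ ^ n := by ring
  · rw [tsum_mul_left, tsum_geometric_of_lt_one (norm_nonneg w) hw1]
    have h1 : (1 - ‖w‖)⁻¹ ≤ (1 - ‖z‖)⁻¹ := by
      apply inv_anti₀ (by linarith) (by linarith)
    calc qCoefBound q a * ‖w‖ * (1 - ‖w‖)⁻¹
        ≤ qCoefBound q a * ‖w‖ * (1 - ‖z‖)⁻¹ := by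
          have := mul_le_mul_of_nonneg_left h1
            (mul_nonneg (qCoefBound_nonneg q a) (norm_nonneg w))
          linarith
      _ = qCoefBound q a * (1 - ‖z‖)⁻¹ * ‖w‖ := by ring

lemma hseries_tendsto_one {q z : ℂ} (a : ℂ) (hq : ‖q‖ < 1) (hz : ‖z‖ < 1) :
    Tendsto (fun n : ℕ => hseries q a (q ^ n * z)) atTop (𝓝 1) := by
  rw [← tendsto_sub_nhds_zero_iff]
  rw [tendsto_zero_iff_norm_tendsto_zero]
  apply squeeze_zero (fun n => norm_nonneg _)
    (g := fun n => qCoefBound q a * (1 - ‖z‖)⁻¹ * ‖z‖ * ‖q‖ ^ n)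
  · intro n
    have hwn : ‖q ^ n * z‖ ≤ ‖z‖ := by
      rw [norm_mul, norm_pow]
      calc ‖q‖ ^ n * ‖z‖ ≤ 1 * ‖z‖ :=
        mul_le_mul_of_nonneg_right (pow_le_one₀ (norm_nonneg q) hq.le) (norm_nonneg z)
        _ = ‖z‖ := one_mul _
    refine (hseries_sub_one_norm a hq hz hwn).trans ?_
    rw [norm_mul, norm_pow]
    have : qCoefBound q a * (1 - ‖z‖)⁻¹ * (‖q‖ ^ n * ‖z‖)
        = qCoefBound q a * (1 - ‖z‖)⁻¹ * ‖z‖ * ‖q‖ ^ n := by ring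
    rw [this]
  · have := (tendsto_pow_atTop_nhds_zero_of_lt_one (norm_nonneg q) hq).const_mul
      (qCoefBound q a * (1 - ‖z‖)⁻¹ * ‖z‖)
    simpa using this

lemma qPoch_succ (q a : ℂ) (n : ℕ) : qPoch q a (n + 1) = qPoch q a n * (1 - q ^ n * a) := by
  rw [qPoch, qPoch, Finset.prod_range_succ]

lemma qCoef_rec {q : ℂ} (a : ℂ) (hq : ‖q‖ < 1) (n : ℕ) :
    qCoef q a (n + 1) * (1 - q ^ (n + 1))
      = qCoef q a n * (1 - q ^ n * a) := by
  have h1 : qPoch q q n ≠ 0 := qPoch_q_ne_zero hq n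
  have h2 : (1 : ℂ) - q ^ n * q ≠ 0 := by
    intro h
    have := qPoch_q_ne_zero hq (n + 1)
    rw [qPoch_succ, h, mul_zero] at this
    exact this rfl
  simp only [qCoef]
  rw [qPoch_succ, qPoch_succ, pow_succ]
  field_simp

set_option maxHeartbeats 1000000 in
lemma hseries_funeq {q a z : ℂ} (hq : ‖q‖ < 1) (hz : ‖z‖ < 1) :
    (1 - z) * hseries q a z = (1 - a * z) * hseries q a (q * z) := by
  have hqz : ‖q * z‖ < 1 := by
    rw [norm_mul]
    calc ‖q‖ * ‖z‖ ≤ 1 * ‖z‖ := mul_le_mul_of_nonneg_right hq.le (norm_nonneg z)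
      _ = ‖z‖ := one_mul _
      _ < 1 := hz
  have S1 : Summable (fun n : ℕ => qCoef q a n * z ^ n) := (qCoef_summable a hq hz).of_norm
  have S2 : Summable (fun n : ℕ => qCoef q a n * (q * z) ^ n) := (qCoef_summable a hq hqz).of_norm
  have S1' : Summable (fun n : ℕ => qCoef q a (n + 1) * z ^ (n + 1)) :=
    (summable_nat_add_iff 1).2 S1
  have S2' : Summable (fun n : ℕ => qCoef q a (n + 1) * (q * z) ^ (n + 1)) :=
    (summable_nat_add_iff 1).2 S2
  have Sz : Summable (fun n : ℕ => qCoef q a n * z ^ (n + 1)) := by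
    apply (S1.mul_left z).congr
    intro n; rw [pow_succ]; ring
  have Sqz : Summable (fun n : ℕ => qCoef q a n * (a * z) * (q * z) ^ n) :=
    (S2.mul_right (a * z)).congr (fun n => by ring)
  have hL : (1 - z) * hseries q a z
      = 1 + ∑' n : ℕ, (qCoef q a (n + 1) * z ^ (n + 1) - qCoef q a n * z ^ (n + 1)) := by
    rw [sub_mul, one_mul, hseries]
    rw [Summable.tsum_eq_zero_add S1]
    have hz0 : qCoef q a 0 * z ^ 0 = 1 := by simp [qCoef_zero]
    rw [hz0]
    have hzt : z * (1 + ∑' n : ℕ, qCoef q a (n + 1) * z ^ (n + 1)) = ∑' n : ℕ, qCoef q a n * z ^ (n + 1) := by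
      rw [mul_add, mul_one, ← tsum_mul_left]
      rw [Summable.tsum_eq_zero_add Sz, pow_one]
      congr 1
      · rw [qCoef_zero, one_mul]
      · exact tsum_congr fun n => by ring
    rw [hzt, Summable.tsum_sub S1' Sz]
    ring
  have haz : a * z * hseries q a (q * z)
      = ∑' n : ℕ, qCoef q a n * (a * z) * (q * z) ^ n := by
    rw [hseries, ← tsum_mul_left]
    exact tsum_congr fun n => by ring
  have hR : (1 - a * z) * hseries q a (q * z)
      = 1 + ∑' n : ℕ, (qCoef q a (n + 1) * (q * z) ^ (n + 1)
          - qCoef q a n * (a * z) * (q * z) ^ n) := by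
    rw [sub_mul, one_mul, haz, hseries, Summable.tsum_eq_zero_add S2, Summable.tsum_sub S2' Sqz,
      qCoef_zero, pow_zero, mul_one]
    ring
  rw [hL, hR]
  congr 1
  exact tsum_congr fun n => by linear_combination z ^ (n + 1) * qCoef_rec a hq n

lemma one_sub_ne_zero_of_norm_lt_one {w : ℂ} (hw : ‖w‖ < 1) : (1 : ℂ) - w ≠ 0 := by
  intro h
  have : w = 1 := by linear_combination -h
  rw [this] at hw
  simp at hw

lemma multipliable_one_sub {q w : ℂ} (hq : ‖q‖ < 1)
    (hne : ∀ k : ℕ, (1 : ℂ) - q ^ k * w ≠ 0) :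
    Multipliable (fun k : ℕ => 1 - q ^ k * w) := by
  have hsl : Summable (fun k : ℕ => Complex.log (1 - q ^ k * w)) := by
    have hten : Tendsto (fun k : ℕ => ‖q‖ ^ k * ‖w‖) atTop (𝓝 0) := by
      simpa using (tendsto_pow_atTop_nhds_zero_of_lt_one (norm_nonneg q) hq).mul_const ‖w‖
    have hev : ∀ᶠ k : ℕ in atTop, ‖q‖ ^ k * ‖w‖ ≤ 1 / 2 := by
      filter_upwards [hten.eventually_lt_const (by norm_num : (0:ℝ) < 1/2)] with k hk
      exact hk.le
    apply Summable.of_norm_bounded_eventually_nat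
      (g := fun k => 3 / 2 * (‖w‖ * ‖q‖ ^ k))
      (((summable_geometric_of_lt_one (norm_nonneg q) hq).mul_left ‖w‖).mul_left (3/2))
    filter_upwards [hev] with k hk
    have h2 : ‖-(q ^ k * w)‖ ≤ 1 / 2 := by
      rw [norm_neg, norm_mul, norm_pow]; exact hk
    have := Complex.norm_log_one_add_half_le_self h2
    rw [show (1 : ℂ) + -(q ^ k * w) = 1 - q ^ k * w by ring] at this
    refine this.trans ?_
    rw [norm_neg, norm_mul, norm_pow]
    nlinarith [norm_nonneg w, pow_nonneg (norm_nonneg q) k]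
  exact Complex.multipliable_of_summable_log hsl

lemma tendsto_qPoch {q w : ℂ} (h : Multipliable fun k : ℕ => 1 - q ^ k * w) :
    Tendsto (fun n : ℕ => qPoch q w n) atTop (𝓝 (qPochInf q w)) := by
  simpa [qPoch, qPochInf] using h.hasProd.tendsto_prod_nat

lemma norm_pow_mul_le {q z : ℂ} (hq : ‖q‖ < 1) (n : ℕ) : ‖q ^ n * z‖ ≤ ‖z‖ := by
  rw [norm_mul, norm_pow]
  calc ‖q‖ ^ n * ‖z‖ ≤ 1 * ‖z‖ :=
        mul_le_mul_of_nonneg_right (pow_le_one₀ (norm_nonneg q) hq.le) (norm_nonneg z)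
    _ = ‖z‖ := one_mul _

theorem qbinom {q a z : ℂ} (hq : ‖q‖ < 1) (hz : ‖z‖ < 1)
    (hne : ∀ k : ℕ, (1 : ℂ) - q ^ k * (a * z) ≠ 0) :
    qPochInf q z * hseries q a z = qPochInf q (a * z) := by
  have key : ∀ n : ℕ, qPoch q z n * hseries q a z
      = qPoch q (a * z) n * hseries q a (q ^ n * z) := by
    intro n
    induction n with
    | zero => simp [qPoch_zero]
    | succ n ih =>
      have hzn : ‖q ^ n * z‖ < 1 := lt_of_le_of_lt (norm_pow_mul_le hq n) hz
      have hfe := hseries_funeq (a := a) hq hzn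
      rw [qPoch_succ, qPoch_succ]
      calc qPoch q z n * (1 - q ^ n * z) * hseries q a z
          = (1 - q ^ n * z) * (qPoch q (a * z) n * hseries q a (q ^ n * z)) := by
            rw [← ih]; ring
        _ = qPoch q (a * z) n * ((1 - q ^ n * z) * hseries q a (q ^ n * z)) := by ring
        _ = qPoch q (a * z) n * ((1 - a * (q ^ n * z)) * hseries q a (q * (q ^ n * z))) := by
            rw [hfe]
        _ = qPoch q (a * z) n * (1 - q ^ n * (a * z)) * hseries q a (q ^ (n + 1) * z) := by
            rw [show q * (q ^ n * z) = q ^ (n + 1) * z by rw [pow_succ]; ring]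
            ring
  have hmz : Multipliable (fun k : ℕ => 1 - q ^ k * z) :=
    multipliable_one_sub hq fun k =>
      one_sub_ne_zero_of_norm_lt_one (lt_of_le_of_lt (norm_pow_mul_le hq k) hz)
  have hmaz : Multipliable (fun k : ℕ => 1 - q ^ k * (a * z)) := multipliable_one_sub hq hne
  have t1 : Tendsto (fun n : ℕ => qPoch q z n * hseries q a z) atTop
      (𝓝 (qPochInf q z * hseries q a z)) := (tendsto_qPoch hmz).mul_const _
  have t2 : Tendsto (fun n : ℕ => qPoch q (a * z) n * hseries q a (q ^ n * z)) atTop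
      (𝓝 (qPochInf q (a * z) * 1)) :=
    (tendsto_qPoch hmaz).mul (hseries_tendsto_one a hq hz)
  have := tendsto_nhds_unique (t1.congr key) t2
  rwa [mul_one] at this

lemma qPochInf_split {q w : ℂ} (hq : ‖q‖ < 1) (hne : ∀ k : ℕ, (1 : ℂ) - q ^ k * w ≠ 0)
    (s : ℕ) : qPochInf q w = qPoch q w s * qPochInf q (q ^ s * w) := by
  have h1 : Multipliable (fun k : ℕ => 1 - q ^ k * w) := multipliable_one_sub hq hne
  have hne2 : ∀ k : ℕ, (1 : ℂ) - q ^ k * (q ^ s * w) ≠ 0 := by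
    intro k
    have := hne (k + s)
    rw [show q ^ (k + s) * w = q ^ k * (q ^ s * w) by rw [pow_add]; ring] at this
    exact this
  have h2 : Multipliable (fun k : ℕ => 1 - q ^ k * (q ^ s * w)) := multipliable_one_sub hq hne2
  have key : ∀ n : ℕ, qPoch q w (n + s) = qPoch q w s * qPoch q (q ^ s * w) n := by
    intro n
    rw [qPoch, qPoch, qPoch, add_comm n s, Finset.prod_range_add]
    congr 1
    exact Finset.prod_congr rfl fun k _ => by rw [pow_add]; ring
  have t1 : Tendsto (fun n : ℕ => qPoch q w (n + s)) atTop (𝓝 (qPochInf q w)) :=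
    (tendsto_qPoch h1).comp (tendsto_add_atTop_nat s)
  have t2 : Tendsto (fun n : ℕ => qPoch q w s * qPoch q (q ^ s * w) n) atTop
      (𝓝 (qPoch q w s * qPochInf q (q ^ s * w))) := (tendsto_qPoch h2).const_mul _
  exact tendsto_nhds_unique t1 (t2.congr fun n => (key n).symm)

lemma summable_pi_prod : ∀ (N : ℕ) (g : Fin N → ℕ → ℂ),
    (∀ j, Summable fun n => ‖g j n‖) →
    Summable (fun f : Fin N → ℕ => ‖∏ j, g j (f j)‖) := by
  intro N
  induction N with
  | zero =>
    intro g _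
    exact .of_finite
  | succ N ih =>
    intro g hg
    have key := (Summable.mul_norm (hg 0) (ih (fun j => g j.succ) (fun j => hg j.succ)))
    have : Summable (fun p : ℕ × (Fin N → ℕ) =>
        ‖∏ j, g j ((Fin.consEquiv (fun _ => ℕ)) (p.1, p.2) j)‖) := by
      refine key.congr fun p => ?_
      congr 1
      rw [Fin.prod_univ_succ]
      simp [Fin.consEquiv]
    rw [← (Fin.consEquiv (fun _ : Fin (N + 1) => ℕ)).summable_iff]
    exact this.congr fun p => rfl

lemma tsum_pi_prod : ∀ (N : ℕ) (g : Fin N → ℕ → ℂ),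
    (∀ j, Summable fun n => ‖g j n‖) →
    ∑' f : Fin N → ℕ, ∏ j, g j (f j) = ∏ j, ∑' n, g j n := by
  intro N
  induction N with
  | zero =>
    intro g _
    simp only [Finset.univ_eq_empty, Finset.prod_empty]
    exact tsum_eq_single default (fun b hb => absurd (Subsingleton.elim b default) hb)
  | succ N ih =>
    intro g hg
    rw [← (Fin.consEquiv (fun _ : Fin (N + 1) => ℕ)).tsum_eq]
    have h1 : ∀ p : ℕ × (Fin N → ℕ),
        (∏ j, g j ((Fin.consEquiv (fun _ => ℕ)) p j))
          = g 0 p.1 * ∏ j : Fin N, g j.succ (p.2 j) := by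
      intro p
      rw [Fin.prod_univ_succ]
      simp [Fin.consEquiv]
    calc ∑' p : ℕ × (Fin N → ℕ), ∏ j, g j ((Fin.consEquiv (fun _ => ℕ)) p j)
        = ∑' p : ℕ × (Fin N → ℕ), g 0 p.1 * ∏ j : Fin N, g j.succ (p.2 j) :=
          tsum_congr h1
      _ = (∑' n : ℕ, g 0 n) * ∑' f : Fin N → ℕ, ∏ j : Fin N, g j.succ (f j) :=
          (tsum_mul_tsum_of_summable_norm (hg 0)
            (summable_pi_prod N (fun j => g j.succ) (fun j => hg j.succ))).symm
      _ = ∏ j : Fin (N + 1), ∑' n : ℕ, g j n := by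
          rw [ih (fun j => g j.succ) (fun j => hg j.succ), Fin.prod_univ_succ]

open scoped BigOperators

/-- The generalized `q`-hypergeometric series `F_{N,M}` with upper parameters `a`,
`b`-type parameters `b`, lower parameters `c` and variables `y`. -/
noncomputable def qHyperF (q : ℂ) {N M : ℕ} (a : Fin N → ℂ) (b : Fin M → ℂ)
    (c : Fin N → ℂ) (y : Fin M → ℂ) : ℂ :=
  ∑' m : Fin M → ℕ,
    (∏ j, qPoch q (a j) (∑ i, m i) / qPoch q (c j) (∑ i, m i)) *
      (∏ i, qPoch q (b i) (m i) / qPoch q q (m i)) * ∏ i, y i ^ m i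

theorem statement0 (M N : ℕ) (q : ℂ) (x a : Fin M → ℂ) (y b : Fin N → ℂ)
    (hq : ‖q‖ < 1)
    (hx : ∀ i, ‖x i‖ < 1) (hy : ∀ j, ‖y j‖ < 1)
    (hby : ∀ j n, qPoch q (b j * y j) n ≠ 0)
    (hyinf : ∀ j, qPochInf q (y j) ≠ 0)
    (hsum : Summable (fun p : (Fin M → ℕ) × (Fin N → ℕ) =>
      ‖(∏ i, qPoch q (a i) (p.1 i) / qPoch q q (p.1 i) * x i ^ p.1 i) *
        (∏ j, qPoch q (b j) (p.2 j) / qPoch q q (p.2 j) * y j ^ p.2 j) *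
        q ^ ((∑ i, p.1 i) * (∑ j, p.2 j))‖)) :
    (∑' p : (Fin M → ℕ) × (Fin N → ℕ),
        (∏ i, qPoch q (a i) (p.1 i) / qPoch q q (p.1 i) * x i ^ p.1 i) *
          (∏ j, qPoch q (b j) (p.2 j) / qPoch q q (p.2 j) * y j ^ p.2 j) *
          q ^ ((∑ i, p.1 i) * (∑ j, p.2 j)))
      = (∏ j, qPochInf q (b j * y j) / qPochInf q (y j)) *
        qHyperF q y a (fun j => b j * y j) x := by
  have hq' : ‖q‖ < 1 := hq
  have hy' : ∀ j, ‖y j‖ < 1 := fun j => hy j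
  -- the summand
  set f : (Fin M → ℕ) × (Fin N → ℕ) → ℂ := fun p =>
    (∏ i, qPoch q (a i) (p.1 i) / qPoch q q (p.1 i) * x i ^ p.1 i) *
      (∏ j, qPoch q (b j) (p.2 j) / qPoch q q (p.2 j) * y j ^ p.2 j) *
      q ^ ((∑ i, p.1 i) * (∑ j, p.2 j)) with hf
  have hsum' : Summable f := by
    apply Summable.of_norm
    exact hsum
  -- value of the inner hseries
  have hval : ∀ (j : Fin N) (s : ℕ), hseries q (b j) (q ^ s * y j)
      = qPochInf q (b j * y j) / qPochInf q (y j)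
        * (qPoch q (y j) s / qPoch q (b j * y j) s) := by
    intro j s
    have hne_y : ∀ k : ℕ, (1 : ℂ) - q ^ k * y j ≠ 0 := fun k =>
      one_sub_ne_zero_of_norm_lt_one (lt_of_le_of_lt (norm_pow_mul_le hq' k) (hy' j))
    have hne_by : ∀ k : ℕ, (1 : ℂ) - q ^ k * (b j * y j) ≠ 0 := fun k h0 =>
      hby j (k + 1) (by rw [qPoch_succ, h0, mul_zero])
    have hz : ‖q ^ s * y j‖ < 1 := lt_of_le_of_lt (norm_pow_mul_le hq' s) (hy' j)
    have hneprod : ∀ k : ℕ, (1 : ℂ) - q ^ k * (b j * (q ^ s * y j)) ≠ 0 := by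
      intro k
      have := hne_by (k + s)
      rw [show q ^ (k + s) * (b j * y j) = q ^ k * (b j * (q ^ s * y j)) by
        rw [pow_add]; ring] at this
      exact this
    have hbin := qbinom (a := b j) hq' hz hneprod
    have hsp1 : qPochInf q (y j) = qPoch q (y j) s * qPochInf q (q ^ s * y j) :=
      qPochInf_split hq' hne_y s
    have hsp2 : qPochInf q (b j * y j)
        = qPoch q (b j * y j) s * qPochInf q (q ^ s * (b j * y j)) :=
      qPochInf_split hq' hne_by s
    have e1 : qPochInf q (b j * (q ^ s * y j)) = qPochInf q (q ^ s * (b j * y j)) := by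
      rw [show b j * (q ^ s * y j) = q ^ s * (b j * y j) by ring]
    have hn0 := mul_ne_zero_iff.mp (hsp1 ▸ hyinf j)
    rw [div_mul_div_comm, eq_div_iff (mul_ne_zero (hyinf j) (hby j s))]
    linear_combination (qPoch q (b j * y j) s * hseries q (b j) (q ^ s * y j)) * hsp1
      - qPoch q (y j) s * hsp2
      + (qPoch q (y j) s * qPoch q (b j * y j) s) * hbin
      + (qPoch q (y j) s * qPoch q (b j * y j) s) * e1
  -- inner sums over n
  have inner : ∀ m : Fin M → ℕ, (∑' n : Fin N → ℕ, f (m, n))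
      = (∏ i, qPoch q (a i) (m i) / qPoch q q (m i) * x i ^ m i)
        * ∏ j, hseries q (b j) (q ^ (∑ i, m i) * y j) := by
    intro m
    set s : ℕ := ∑ i, m i with hs
    have hgs : ∀ j : Fin N, Summable fun k : ℕ => ‖qCoef q (b j) k * (q ^ s * y j) ^ k‖ :=
      fun j => qCoef_summable (b j) hq'
        (lt_of_le_of_lt (norm_pow_mul_le hq' s) (hy' j))
    calc (∑' n : Fin N → ℕ, f (m, n))
        = ∑' n : Fin N → ℕ, (∏ i, qPoch q (a i) (m i) / qPoch q q (m i) * x i ^ m i)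
            * ∏ j, qCoef q (b j) (n j) * (q ^ s * y j) ^ n j := by
          apply tsum_congr
          intro n
          rw [hf]
          simp only
          rw [pow_mul, ← Finset.prod_pow_eq_pow_sum, mul_assoc, ← Finset.prod_mul_distrib]
          congr 1
          apply Finset.prod_congr rfl
          intro j _
          rw [qCoef, mul_pow]
          ring
      _ = (∏ i, qPoch q (a i) (m i) / qPoch q q (m i) * x i ^ m i)
            * ∑' n : Fin N → ℕ, ∏ j, qCoef q (b j) (n j) * (q ^ s * y j) ^ n j :=
          tsum_mul_left
      _ = (∏ i, qPoch q (a i) (m i) / qPoch q q (m i) * x i ^ m i)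
            * ∏ j, hseries q (b j) (q ^ s * y j) := by
          rw [tsum_pi_prod N _ hgs]
          rfl
  -- put everything together
  rw [Summable.tsum_prod hsum']
  calc (∑' m : Fin M → ℕ, ∑' n : Fin N → ℕ, f (m, n))
      = ∑' m : Fin M → ℕ, (∏ j, qPochInf q (b j * y j) / qPochInf q (y j))
          * ((∏ j, qPoch q (y j) (∑ i, m i) / qPoch q (b j * y j) (∑ i, m i))
            * (∏ i, qPoch q (a i) (m i) / qPoch q q (m i)) * ∏ i, x i ^ m i) := by
        apply tsum_congr
        intro m
        rw [inner m]
        have : ∏ j, hseries q (b j) (q ^ (∑ i, m i) * y j)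
            = (∏ j, qPochInf q (b j * y j) / qPochInf q (y j))
              * ∏ j, qPoch q (y j) (∑ i, m i) / qPoch q (b j * y j) (∑ i, m i) := by
          rw [← Finset.prod_mul_distrib]
          exact Finset.prod_congr rfl fun j _ => hval j (∑ i, m i)
        rw [this, Finset.prod_mul_distrib]
        ring
    _ = (∏ j, qPochInf q (b j * y j) / qPochInf q (y j))
        * qHyperF q y a (fun j => b j * y j) x := by
        rw [tsum_mul_left, qHyperF]
end

section
/- Duality relation for the series F_{N,M}: let q, x_1,…,x_M, y_1,…,y_N, a_1,…,a_M, b_1,…,b_N be complex numbers with |q| < 1, |x_i| < 1 and |y_j| < 1 for all i, j. Assume (b_j y_j;q)_n ≠ 0 and (a_i x_i;q)_n ≠ 0 for all i, j and all n ∈ ℕ, that (x_i;q)_∞ ≠ 0 and (y_j;q)_∞ ≠ 0 for all i, j, and that the doubly-indexed family (m,n) ∈ ℕ^M × ℕ^N ↦ ∏_{i=1}^M ((a_i;q)_{m_i}/(q;q)_{m_i}) x_i^{m_i} · ∏_{j=1}^N ((b_j;q)_{n_j}/(q;q)_{n_j}) y_j^{n_j} · q^{|m||n|} is absolutely summable.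 Then F_{N,M}({y_j},{a_i};{b_j y_j};{x_i}) = [∏_{j=1}^N (y_j;q)_∞ · ∏_{i=1}^M (a_i x_i;q)_∞] / [∏_{j=1}^N (b_j y_j;q)_∞ · ∏_{i=1}^M (x_i;q)_∞] · F_{M,N}({x_i},{b_j};{a_i x_i};{y_j}). -/
open scoped BigOperators
open Filter Topology

set_option maxHeartbeats 1000000

namespace QAux


lemma qPoch_succ (q a : ℂ) (n : ℕ) :
    qPoch q a (n + 1) = qPoch q a n * (1 - q ^ n * a) :=
  Finset.prod_range_succ _ _

lemma summable_log {q : ℂ} (hq : ‖q‖ < 1) (a : ℂ) :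
    Summable fun k : ℕ => Complex.log (1 - q ^ k * a) := by
  obtain ⟨K, hK⟩ : ∃ K : ℕ, ‖q‖ ^ K * ‖a‖ ≤ 1/2 := by
    have h0 : Tendsto (fun n : ℕ => ‖q‖ ^ n * ‖a‖) atTop (𝓝 (0 * ‖a‖)) :=
      (tendsto_pow_atTop_nhds_zero_of_lt_one (norm_nonneg q) hq).mul_const _
    rw [zero_mul] at h0
    exact ((h0.eventually (eventually_le_nhds (by norm_num : (0:ℝ) < 1/2))).exists)
  rw [← summable_nat_add_iff K]
  apply Summable.of_norm_bounded (g := fun k => (3/2) * (‖q‖ ^ K * ‖a‖) * ‖q‖ ^ k)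
  · exact ((summable_geometric_of_lt_one (norm_nonneg q) hq).mul_left _)
  · intro k
    have hnorm : ‖q ^ (k + K) * a‖ = ‖q‖ ^ k * (‖q‖ ^ K * ‖a‖) := by
      rw [norm_mul, norm_pow, pow_add]; ring
    have hle : ‖-(q ^ (k + K) * a)‖ ≤ 1/2 := by
      rw [norm_neg, hnorm]
      calc ‖q‖ ^ k * (‖q‖ ^ K * ‖a‖) ≤ 1 * (1/2) := by
            apply mul_le_mul (pow_le_one₀ (norm_nonneg q) hq.le) hK
              (by positivity) zero_le_one
        _ = 1/2 := by norm_num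
    have := Complex.norm_log_one_add_half_le_self hle
    rw [show (1 : ℂ) + -(q ^ (k + K) * a) = 1 - q ^ (k + K) * a by ring] at this
    refine this.trans ?_
    rw [norm_neg, hnorm]; nlinarith [pow_nonneg (norm_nonneg q) k,
      mul_nonneg (pow_nonneg (norm_nonneg q) K) (norm_nonneg a)]

lemma hasProd_qPochInf {q : ℂ} (hq : ‖q‖ < 1) (a : ℂ) (h0 : ∀ k, 1 - q ^ k * a ≠ 0) :
    HasProd (fun k : ℕ => 1 - q ^ k * a) (qPochInf q a) := by
  exact (Complex.hasProd_of_hasSum_log (f := fun k : ℕ => 1 - q ^ k * a) h0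
    (summable_log hq a).hasSum).multipliable.hasProd

lemma qPochInf_ne_zero {q : ℂ} (hq : ‖q‖ < 1) (a : ℂ) (h0 : ∀ k, 1 - q ^ k * a ≠ 0) :
    qPochInf q a ≠ 0 := by
  have := Complex.cexp_tsum_eq_tprod (f := fun k : ℕ => 1 - q ^ k * a) h0 (summable_log hq a)
  rw [qPochInf, ← this]
  exact Complex.exp_ne_zero _

/-- if a factor vanishes, the whole tprod vanishes -/
lemma factor_ne_zero {q a : ℂ} (h : qPochInf q a ≠ 0) (k : ℕ) : 1 - q ^ k * a ≠ 0 := by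
  intro hk
  apply h
  have : HasProd (fun k : ℕ => 1 - q ^ k * a) 0 := by
    have hev : ∀ᶠ s : Finset ℕ in atTop, (0 : ℂ) = ∏ i ∈ s, (1 - q ^ i * a) := by
      filter_upwards [Filter.eventually_ge_atTop ({k} : Finset ℕ)] with s hs
      exact (Finset.prod_eq_zero (hs (Finset.mem_singleton_self k)) hk).symm
    exact (tendsto_const_nhds : Tendsto (fun _ : Finset ℕ => (0:ℂ)) atTop (𝓝 0)).congr' hev
  exact this.tprod_eq

lemma qPochInf_split {q : ℂ} (hq : ‖q‖ < 1) (a : ℂ) (h0 : ∀ k, 1 - q ^ k * a ≠ 0) (s : ℕ) :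
    qPochInf q a = qPoch q a s * qPochInf q (q ^ s * a) := by
  have hshift : Multipliable (fun k : ℕ => 1 - q ^ (k + s) * a) := by
    have := (hasProd_qPochInf hq (q ^ s * a) (fun k => by
      have := h0 (k + s); rw [pow_add] at this
      rwa [show q ^ k * (q ^ s * a) = q ^ k * q ^ s * a by ring])).multipliable
    refine this.congr fun k => ?_
    rw [pow_add]; ring
  have := Multipliable.prod_mul_tprod_nat_mul' (f := fun k : ℕ => 1 - q ^ k * a) (k := s) hshift
  rw [qPochInf, ← this, qPoch]
  congr 1
  rw [qPochInf]
  refine tprod_congr fun k => ?_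
  show 1 - q ^ (k + s) * a = 1 - q ^ k * (q ^ s * a)
  rw [pow_add]; ring

lemma prod_one_add_le {q : ℂ} (hq : ‖q‖ < 1) (a : ℂ) (s : Finset ℕ) :
    ∏ k ∈ s, (1 + ‖q‖ ^ k * ‖a‖) ≤ Real.exp (‖a‖ / (1 - ‖q‖)) := by
  have h1 : ∏ k ∈ s, (1 + ‖q‖ ^ k * ‖a‖) ≤ ∏ k ∈ s, Real.exp (‖q‖ ^ k * ‖a‖) := by
    apply Finset.prod_le_prod
    · intro k _; positivity
    · intro k _; linarith [Real.add_one_le_exp (‖q‖ ^ k * ‖a‖)]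
  rw [← Real.exp_sum] at h1
  refine h1.trans (Real.exp_le_exp.2 ?_)
  have hsum : Summable fun k : ℕ => ‖q‖ ^ k * ‖a‖ :=
    (summable_geometric_of_lt_one (norm_nonneg q) hq).mul_right _
  refine (Summable.sum_le_tsum s (fun k _ => by positivity) hsum).trans (le_of_eq ?_)
  rw [tsum_mul_right, tsum_geometric_of_lt_one (norm_nonneg q) hq, div_eq_mul_inv, mul_comm]

lemma norm_qPoch_le {q : ℂ} (hq : ‖q‖ < 1) (a : ℂ) (n : ℕ) :
    ‖qPoch q a n‖ ≤ Real.exp (‖a‖ / (1 - ‖q‖)) := by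
  refine le_trans (Finset.norm_prod_le _ _) ?_
  refine le_trans (Finset.prod_le_prod (fun k _ => norm_nonneg _) (fun k _ => ?_))
    (prod_one_add_le hq a _)
  calc ‖1 - q ^ k * a‖ ≤ ‖(1 : ℂ)‖ + ‖q ^ k * a‖ := norm_sub_le _ _
    _ = 1 + ‖q‖ ^ k * ‖a‖ := by rw [norm_one, norm_mul, norm_pow]

lemma norm_qPochInf_le {q : ℂ} (hq : ‖q‖ < 1) (a : ℂ) (h0 : ∀ k, 1 - q ^ k * a ≠ 0) :
    ‖qPochInf q a‖ ≤ Real.exp (‖a‖ / (1 - ‖q‖)) := by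
  have h := (hasProd_qPochInf hq a h0).norm
  refine le_of_tendsto h (Filter.Eventually.of_forall fun s => ?_)
  refine le_trans (Finset.prod_le_prod (fun k _ => norm_nonneg _) (fun k _ => ?_))
    (prod_one_add_le hq a _)
  calc ‖1 - q ^ k * a‖ ≤ ‖(1 : ℂ)‖ + ‖q ^ k * a‖ := norm_sub_le _ _
    _ = 1 + ‖q‖ ^ k * ‖a‖ := by rw [norm_one, norm_mul, norm_pow]

lemma norm_qPoch_ge {q : ℂ} (hq : ‖q‖ < 1) (a : ℂ) (h0 : ∀ k, 1 - q ^ k * a ≠ 0) :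
    ∃ c > 0, ∀ n, c ≤ ‖qPoch q a n‖ := by
  refine ⟨‖qPochInf q a‖ / Real.exp (‖a‖ / (1 - ‖q‖)),
    div_pos (norm_pos_iff.mpr (qPochInf_ne_zero hq a h0)) (Real.exp_pos _), fun n => ?_⟩
  have h0' : ∀ k, 1 - q ^ k * (q ^ n * a) ≠ 0 := by
    intro k
    have := h0 (k + n); rw [pow_add] at this
    rwa [show q ^ k * (q ^ n * a) = q ^ k * q ^ n * a by ring]
  have hsplit := qPochInf_split hq a h0 n
  have hle : ‖qPochInf q (q ^ n * a)‖ ≤ Real.exp (‖a‖ / (1 - ‖q‖)) := by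
    refine (norm_qPochInf_le hq _ h0').trans (Real.exp_le_exp.2 ?_)
    apply div_le_div_of_nonneg_right ?_ (by linarith)
    · rw [norm_mul, norm_pow]
      calc ‖q‖ ^ n * ‖a‖ ≤ 1 * ‖a‖ :=
        mul_le_mul_of_nonneg_right (pow_le_one₀ (norm_nonneg q) hq.le) (norm_nonneg a)
        _ = ‖a‖ := one_mul _
  rw [div_le_iff₀ (Real.exp_pos _)]
  calc ‖qPochInf q a‖ = ‖qPoch q a n‖ * ‖qPochInf q (q ^ n * a)‖ := by
        rw [hsplit, norm_mul]
    _ ≤ ‖qPoch q a n‖ * Real.exp (‖a‖ / (1 - ‖q‖)) :=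
        mul_le_mul_of_nonneg_left hle (norm_nonneg _)

lemma one_sub_q_pow_ne_zero {q : ℂ} (hq : ‖q‖ < 1) (k : ℕ) : 1 - q ^ k * q ≠ 0 := by
  intro h
  have h1 : q ^ k * q = 1 := by linear_combination -h
  have := norm_mul (q ^ k) q ▸ congrArg norm h1
  rw [norm_pow, norm_one] at this
  have hle : ‖q‖ ^ k * ‖q‖ ≤ 1 * ‖q‖ :=
    mul_le_mul_of_nonneg_right (pow_le_one₀ (norm_nonneg q) hq.le) (norm_nonneg q)
  rw [one_mul] at hle
  linarith [this ▸ hle]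

lemma coeff_bound {q : ℂ} (hq : ‖q‖ < 1) (b : ℂ) :
    ∃ D > 0, ∀ n, ‖qPoch q b n / qPoch q q n‖ ≤ D := by
  obtain ⟨c, hc, hcle⟩ := norm_qPoch_ge hq q (one_sub_q_pow_ne_zero hq)
  refine ⟨Real.exp (‖b‖ / (1 - ‖q‖)) / c, by positivity, fun n => ?_⟩
  rw [norm_div]
  exact div_le_div₀ (Real.exp_pos _).le (norm_qPoch_le hq b n) hc (hcle n)


lemma qPoch_q_ne_zero {q : ℂ} (hq : ‖q‖ < 1) (n : ℕ) : qPoch q q n ≠ 0 :=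
  Finset.prod_ne_zero_iff.2 fun k _ => one_sub_q_pow_ne_zero hq k

lemma coeff_rec {q : ℂ} (hq : ‖q‖ < 1) (b : ℂ) (n : ℕ) :
    qPoch q b (n + 1) / qPoch q q (n + 1) * (1 - q ^ (n + 1)) =
      qPoch q b n / qPoch q q n * (1 - q ^ n * b) := by
  rw [qPoch_succ, qPoch_succ]
  have h1 : qPoch q q n ≠ 0 := qPoch_q_ne_zero hq n
  have h2 : 1 - q ^ n * q ≠ 0 := one_sub_q_pow_ne_zero hq n
  field_simp
  ring_nf

lemma summable_coeff_mul_pow {q : ℂ} (hq : ‖q‖ < 1) (b z : ℂ) (hz : ‖z‖ < 1) :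
    Summable fun n : ℕ => qPoch q b n / qPoch q q n * z ^ n := by
  obtain ⟨D, hD, hDle⟩ := coeff_bound hq b
  apply Summable.of_norm_bounded (g := fun n => D * ‖z‖ ^ n)
    ((summable_geometric_of_lt_one (norm_nonneg z) hz).mul_left D)
  intro n
  rw [norm_mul, norm_pow]
  exact mul_le_mul_of_nonneg_right (hDle n) (by positivity)

/-- the partial sums `S z` of the basic hypergeometric series -/
noncomputable def qS (q b z : ℂ) : ℂ := ∑' n : ℕ, qPoch q b n / qPoch q q n * z ^ n

lemma funEq {q : ℂ} (hq : ‖q‖ < 1) (b : ℂ) (z : ℂ) (hz : ‖z‖ < 1) :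
    (1 - z) * qS q b z = (1 - b * z) * qS q b (q * z) := by
  have hc : True := trivial
  let c : ℕ → ℂ := fun n => qPoch q b n / qPoch q q n
  have hqz : ‖q * z‖ < 1 := by
    rw [norm_mul]
    calc ‖q‖ * ‖z‖ ≤ 1 * ‖z‖ := mul_le_mul_of_nonneg_right hq.le (norm_nonneg z)
      _ = ‖z‖ := one_mul _
      _ < 1 := hz
  have hs1 : Summable fun n => c n * z ^ n := summable_coeff_mul_pow hq b z hz
  have hs2 : Summable fun n => c n * (q * z) ^ n := summable_coeff_mul_pow hq b (q * z) hqz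
  have hsub : Summable fun n => c n * z ^ n - c n * (q * z) ^ n := hs1.sub hs2
  have key : ∀ n : ℕ, c (n + 1) * z ^ (n + 1) - c (n + 1) * (q * z) ^ (n + 1) =
      z * (c n * z ^ n) - (b * z) * (c n * (q * z) ^ n) := by
    intro n
    have hrec := coeff_rec hq b n
    show qPoch q b (n+1) / qPoch q q (n+1) * z ^ (n + 1) -
          qPoch q b (n+1) / qPoch q q (n+1) * (q * z) ^ (n + 1)
        = z * (qPoch q b n / qPoch q q n * z ^ n) -
            (b * z) * (qPoch q b n / qPoch q q n * (q * z) ^ n)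
    calc qPoch q b (n+1) / qPoch q q (n+1) * z ^ (n + 1) -
          qPoch q b (n+1) / qPoch q q (n+1) * (q * z) ^ (n + 1)
        = (qPoch q b (n+1) / qPoch q q (n+1) * (1 - q ^ (n+1))) * z ^ (n + 1) := by
          rw [mul_pow]; ring
      _ = (qPoch q b n / qPoch q q n * (1 - q ^ n * b)) * z ^ (n + 1) := by rw [hrec]
      _ = z * (qPoch q b n / qPoch q q n * z ^ n) -
            (b * z) * (qPoch q b n / qPoch q q n * (q * z) ^ n) := by
          rw [mul_pow, pow_succ]; ring
  have h1 : qS q b z - qS q b (q * z) = ∑' n, (c n * z ^ n - c n * (q * z) ^ n) := by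
    rw [qS, qS, ← Summable.tsum_sub hs1 hs2]
  have h2 : ∑' n, (c n * z ^ n - c n * (q * z) ^ n)
      = ∑' n, (c (n + 1) * z ^ (n + 1) - c (n + 1) * (q * z) ^ (n + 1)) := by
    rw [Summable.tsum_eq_zero_add hsub]
    simp
  have h3 : ∑' n, (c (n + 1) * z ^ (n + 1) - c (n + 1) * (q * z) ^ (n + 1))
      = z * qS q b z - (b * z) * qS q b (q * z) := by
    rw [tsum_congr key, qS, qS, ← tsum_mul_left (a := z), ← tsum_mul_left (a := b * z),
      ← Summable.tsum_sub (hs1.mul_left z) (hs2.mul_left (b * z))]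
  have := h1.trans (h2.trans h3)
  linear_combination this

lemma iterEq {q : ℂ} (hq : ‖q‖ < 1) (b w : ℂ) (hw : ‖w‖ < 1) (K : ℕ) :
    qS q b w * qPoch q w K = qS q b (q ^ K * w) * qPoch q (b * w) K := by
  induction K with
  | zero => simp [qPoch]
  | succ K ih =>
    have hKw : ‖q ^ K * w‖ < 1 := by
      rw [norm_mul, norm_pow]
      calc ‖q‖ ^ K * ‖w‖ ≤ 1 * ‖w‖ :=
        mul_le_mul_of_nonneg_right (pow_le_one₀ (norm_nonneg q) hq.le) (norm_nonneg w)
        _ = ‖w‖ := one_mul _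
        _ < 1 := hw
    have hfe := funEq hq b (q ^ K * w) hKw
    rw [qPoch_succ, qPoch_succ, ← mul_assoc, ih]
    have e1 : q * (q ^ K * w) = q ^ (K + 1) * w := by rw [pow_succ]; ring
    rw [e1] at hfe
    linear_combination qPoch q (b * w) K * hfe

lemma hasProd_zero_of_factor {f : ℕ → ℂ} (k : ℕ) (hk : f k = 0) : HasProd f 0 := by
  have hev : ∀ᶠ s : Finset ℕ in atTop, (0 : ℂ) = ∏ i ∈ s, f i := by
    filter_upwards [Filter.eventually_ge_atTop ({k} : Finset ℕ)] with s hs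
    exact (Finset.prod_eq_zero (hs (Finset.mem_singleton_self k)) hk).symm
  exact (tendsto_const_nhds : Tendsto (fun _ : Finset ℕ => (0:ℂ)) atTop (𝓝 0)).congr' hev

lemma tendsto_qPoch {q : ℂ} (hq : ‖q‖ < 1) (a : ℂ) :
    Tendsto (fun K => qPoch q a K) atTop (𝓝 (qPochInf q a)) := by
  by_cases h0 : ∀ k, 1 - q ^ k * a ≠ 0
  · exact (hasProd_qPochInf hq a h0).tendsto_prod_nat
  · push_neg at h0
    obtain ⟨k0, hk0⟩ := h0
    have hzero : qPochInf q a = 0 := (hasProd_zero_of_factor k0 hk0).tprod_eq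
    rw [hzero]
    have hev : ∀ᶠ K : ℕ in atTop, (0 : ℂ) = qPoch q a K := by
      filter_upwards [Filter.eventually_ge_atTop (k0 + 1)] with K hK
      exact (Finset.prod_eq_zero (Finset.mem_range.2 hK) hk0).symm
    exact (tendsto_const_nhds : Tendsto (fun _ : ℕ => (0:ℂ)) atTop (𝓝 0)).congr' hev

lemma tendsto_qS_one {q : ℂ} (hq : ‖q‖ < 1) (b w : ℂ) (hw : ‖w‖ < 1) :
    Tendsto (fun K => qS q b (q ^ K * w)) atTop (𝓝 1) := by
  obtain ⟨D, hD, hDle⟩ := coeff_bound hq b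
  have hbound : ∀ z : ℂ, ‖z‖ ≤ ‖w‖ → ‖qS q b z - 1‖ ≤ D / (1 - ‖w‖) * ‖z‖ := by
    intro z hz
    have hz1 : ‖z‖ < 1 := lt_of_le_of_lt hz hw
    have hs : Summable fun n => qPoch q b n / qPoch q q n * z ^ n :=
      summable_coeff_mul_pow hq b z hz1
    have h0 : qS q b z = 1 + ∑' n, qPoch q b (n+1) / qPoch q q (n+1) * z ^ (n+1) := by
      rw [qS, Summable.tsum_eq_zero_add hs]
      congr 1
      simp [qPoch]
    rw [h0]
    have hsn : Summable fun n : ℕ => D * ‖z‖ * ‖z‖ ^ n :=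
      (summable_geometric_of_lt_one (norm_nonneg z) hz1).mul_left _
    have habs : Summable fun n : ℕ => ‖qPoch q b (n+1) / qPoch q q (n+1) * z ^ (n+1)‖ := by
      apply Summable.of_nonneg_of_le (fun n => norm_nonneg _) _ hsn
      intro n
      rw [norm_mul, norm_pow, pow_succ]
      calc ‖qPoch q b (n+1) / qPoch q q (n+1)‖ * (‖z‖ ^ n * ‖z‖)
          ≤ D * (‖z‖ ^ n * ‖z‖) := by
            apply mul_le_mul_of_nonneg_right (hDle _) (by positivity)
        _ = D * ‖z‖ * ‖z‖ ^ n := by ring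
    calc ‖1 + ∑' n, qPoch q b (n+1) / qPoch q q (n+1) * z ^ (n+1) - 1‖
        = ‖∑' n, qPoch q b (n+1) / qPoch q q (n+1) * z ^ (n+1)‖ := by
          rw [add_sub_cancel_left]
      _ ≤ ∑' n, ‖qPoch q b (n+1) / qPoch q q (n+1) * z ^ (n+1)‖ := norm_tsum_le_tsum_norm habs
      _ ≤ ∑' n : ℕ, D * ‖z‖ * ‖z‖ ^ n := by
          apply Summable.tsum_le_tsum _ habs hsn
          intro n
          rw [norm_mul, norm_pow, pow_succ]
          calc ‖qPoch q b (n+1) / qPoch q q (n+1)‖ * (‖z‖ ^ n * ‖z‖)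
              ≤ D * (‖z‖ ^ n * ‖z‖) := mul_le_mul_of_nonneg_right (hDle _) (by positivity)
            _ = D * ‖z‖ * ‖z‖ ^ n := by ring
      _ = D * ‖z‖ * (1 - ‖z‖)⁻¹ := by
          rw [tsum_mul_left, tsum_geometric_of_lt_one (norm_nonneg z) hz1]
      _ ≤ D / (1 - ‖w‖) * ‖z‖ := by
          rw [div_eq_mul_inv]
          have h1 : (1 - ‖z‖)⁻¹ ≤ (1 - ‖w‖)⁻¹ := by
            apply inv_anti₀ (by linarith) (by linarith)
          calc D * ‖z‖ * (1 - ‖z‖)⁻¹ ≤ D * ‖z‖ * (1 - ‖w‖)⁻¹ :=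
              mul_le_mul_of_nonneg_left h1 (by positivity)
            _ = D * (1 - ‖w‖)⁻¹ * ‖z‖ := by ring
  rw [tendsto_iff_norm_sub_tendsto_zero]
  apply squeeze_zero (fun K => norm_nonneg _)
    (g := fun K => D / (1 - ‖w‖) * ‖w‖ * ‖q‖ ^ K)
  · intro K
    have hzle : ‖q ^ K * w‖ ≤ ‖w‖ := by
      rw [norm_mul, norm_pow]
      calc ‖q‖ ^ K * ‖w‖ ≤ 1 * ‖w‖ :=
        mul_le_mul_of_nonneg_right (pow_le_one₀ (norm_nonneg q) hq.le) (norm_nonneg w)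
        _ = ‖w‖ := one_mul _
    refine (hbound _ hzle).trans ?_
    rw [norm_mul, norm_pow]
    calc D / (1 - ‖w‖) * (‖q‖ ^ K * ‖w‖) = D / (1 - ‖w‖) * ‖w‖ * ‖q‖ ^ K := by ring
      _ ≤ D / (1 - ‖w‖) * ‖w‖ * ‖q‖ ^ K := le_refl _
  · have := (tendsto_pow_atTop_nhds_zero_of_lt_one (norm_nonneg q) hq).const_mul
      (D / (1 - ‖w‖) * ‖w‖)
    simpa using this

theorem qbinom {q : ℂ} (hq : ‖q‖ < 1) (b w : ℂ) (hw : ‖w‖ < 1)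
    (h0 : ∀ k, 1 - q ^ k * w ≠ 0) :
    ∑' n : ℕ, qPoch q b n / qPoch q q n * w ^ n = qPochInf q (b * w) / qPochInf q w := by
  have hL : Tendsto (fun K => qS q b w * qPoch q w K) atTop (𝓝 (qS q b w * qPochInf q w)) :=
    (tendsto_qPoch hq w).const_mul _
  have hR : Tendsto (fun K => qS q b (q ^ K * w) * qPoch q (b * w) K) atTop
      (𝓝 (1 * qPochInf q (b * w))) :=
    (tendsto_qS_one hq b w hw).mul (tendsto_qPoch hq (b * w))
  have heq : (fun K => qS q b w * qPoch q w K)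
      = fun K => qS q b (q ^ K * w) * qPoch q (b * w) K :=
    funext fun K => iterEq hq b w hw K
  rw [heq] at hL
  have := tendsto_nhds_unique hL hR
  rw [one_mul] at this
  rw [show (∑' n : ℕ, qPoch q b n / qPoch q q n * w ^ n) = qS q b w from rfl]
  rw [eq_div_iff (qPochInf_ne_zero hq w h0)]
  exact this


lemma summable_pi_prod_norm {K : ℕ} (f : Fin K → ℕ → ℂ)
    (hf : ∀ j, Summable fun n => ‖f j n‖) :
    Summable (fun m : Fin K → ℕ => ∏ j, ‖f j (m j)‖) := by
  induction K with
  | zero => exact Summable.of_finite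
  | succ K ih =>
    have n0 : (0 : ℕ → ℝ) ≤ fun n => ‖f 0 n‖ := fun n => norm_nonneg _
    have n1 : (0 : (Fin K → ℕ) → ℝ) ≤ fun m : Fin K → ℕ => ∏ j, ‖f j.succ (m j)‖ :=
      fun m => Finset.prod_nonneg fun j _ => norm_nonneg _
    have key := Summable.mul_of_nonneg (hf 0) (ih (fun j => f j.succ) (fun j => hf j.succ)) n0 n1
    refine ((Fin.consEquiv (fun _ : Fin (K + 1) => ℕ)).summable_iff).1 (key.congr fun p => ?_)
    simp only [Function.comp_apply, Fin.consEquiv_apply]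
    rw [Fin.prod_univ_succ]
    simp [Fin.cons_zero, Fin.cons_succ]

lemma summable_pi_prod {K : ℕ} (f : Fin K → ℕ → ℂ)
    (hf : ∀ j, Summable fun n => ‖f j n‖) :
    Summable (fun m : Fin K → ℕ => ∏ j, f j (m j)) := by
  apply Summable.of_norm
  refine (summable_pi_prod_norm f hf).congr fun m => ?_
  rw [norm_prod]

lemma tsum_pi_prod {K : ℕ} (f : Fin K → ℕ → ℂ)
    (hf : ∀ j, Summable fun n => ‖f j n‖) :
    ∑' m : Fin K → ℕ, ∏ j, f j (m j) = ∏ j, ∑' n, f j n := by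
  induction K with
  | zero =>
    have h : ∀ m : Fin 0 → ℕ, (∏ j, f j (m j)) = 1 := fun m => by simp
    rw [tsum_congr h,
      tsum_eq_single (fun _ => 0) (fun m hm => absurd (Subsingleton.elim m _) hm)]
    simp
  | succ K ih =>
    have e := Fin.consEquiv (fun _ : Fin (K + 1) => ℕ)
    have hsum : Summable (fun m : Fin (K + 1) → ℕ => ∏ j, f j (m j)) :=
      summable_pi_prod f hf
    have h1 : ∑' m : Fin (K + 1) → ℕ, ∏ j, f j (m j)
        = ∑' p : ℕ × (Fin K → ℕ), f 0 p.1 * ∏ j, f j.succ (p.2 j) := by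
      rw [← (Fin.consEquiv (fun _ : Fin (K + 1) => ℕ)).tsum_eq (fun m => ∏ j, f j (m j))]
      refine tsum_congr fun p => ?_
      rw [Fin.prod_univ_succ]
      simp [Fin.consEquiv_apply, Fin.cons_zero, Fin.cons_succ]
    have hsum2 : Summable (fun p : ℕ × (Fin K → ℕ) => f 0 p.1 * ∏ j, f j.succ (p.2 j)) := by
      have n0 : (0 : ℕ → ℝ) ≤ fun n => ‖f 0 n‖ := fun n => norm_nonneg _
      have n1 : (0 : (Fin K → ℕ) → ℝ) ≤ fun m : Fin K → ℕ => ∏ j, ‖f j.succ (m j)‖ :=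
        fun m => Finset.prod_nonneg fun j _ => norm_nonneg _
      have key := Summable.mul_of_nonneg (hf 0)
        (summable_pi_prod_norm (fun j => f j.succ) (fun j => hf j.succ)) n0 n1
      have keyC : Summable (fun p : ℕ × (Fin K → ℕ) => ‖f 0 p.1 * ∏ j, f j.succ (p.2 j)‖) := by
        refine key.congr fun p => ?_
        rw [norm_mul, norm_prod]
      exact keyC.of_norm
    rw [h1, Summable.tsum_prod hsum2]
    simp only
    have h2 : ∀ a : ℕ, ∑' m : Fin K → ℕ, f 0 a * ∏ j, f j.succ (m j)
        = f 0 a * ∑' m : Fin K → ℕ, ∏ j, f j.succ (m j) := fun a => tsum_mul_left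
    rw [tsum_congr h2, tsum_mul_right, ih (fun j => f j.succ) (fun j => hf j.succ),
      Fin.prod_univ_succ]

noncomputable def dblTerm (q : ℂ) {M N : ℕ} (x a : Fin M → ℂ) (y b : Fin N → ℂ)
    (p : (Fin M → ℕ) × (Fin N → ℕ)) : ℂ :=
  (∏ i, qPoch q (a i) (p.1 i) / qPoch q q (p.1 i) * x i ^ p.1 i) *
    (∏ j, qPoch q (b j) (p.2 j) / qPoch q q (p.2 j) * y j ^ p.2 j) *
    q ^ ((∑ i, p.1 i) * (∑ j, p.2 j))

lemma norm_qs_lt_one {q : ℂ} (hq : ‖q‖ < 1) {z : ℂ} (hz : ‖z‖ < 1) (s : ℕ) :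
    ‖q ^ s * z‖ < 1 := by
  rw [norm_mul, norm_pow]
  calc ‖q‖ ^ s * ‖z‖ ≤ 1 * ‖z‖ :=
      mul_le_mul_of_nonneg_right (pow_le_one₀ (norm_nonneg q) hq.le) (norm_nonneg z)
    _ = ‖z‖ := one_mul _
    _ < 1 := hz

lemma shift_ne_zero {q z : ℂ} (h0 : ∀ k, 1 - q ^ k * z ≠ 0) (s : ℕ) :
    ∀ k, 1 - q ^ k * (q ^ s * z) ≠ 0 := by
  intro k
  have := h0 (k + s); rw [pow_add] at this
  rwa [show q ^ k * (q ^ s * z) = q ^ k * q ^ s * z by ring]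

lemma poch_factor_ne_zero {q z : ℂ} (h : ∀ n, qPoch q z n ≠ 0) (k : ℕ) :
    1 - q ^ k * z ≠ 0 := by
  intro hk
  exact h (k + 1) (Finset.prod_eq_zero (Finset.mem_range.2 (Nat.lt_succ_self k)) hk)

lemma summable_norm_coeff_mul_pow {q : ℂ} (hq : ‖q‖ < 1) (b z : ℂ) (hz : ‖z‖ < 1) :
    Summable fun n : ℕ => ‖qPoch q b n / qPoch q q n * z ^ n‖ :=
  (summable_coeff_mul_pow hq b z hz).norm

lemma pointwise (q : ℂ) {M N : ℕ} (x a : Fin M → ℂ) (y b : Fin N → ℂ)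
    (m : Fin M → ℕ) (n : Fin N → ℕ) :
    (∏ i, qPoch q (a i) (m i) / qPoch q q (m i)) * (∏ i, x i ^ m i) *
      ∏ j, (qPoch q (b j) (n j) / qPoch q q (n j) * (q ^ (∑ i, m i) * y j) ^ n j)
    = dblTerm q x a y b (m, n) := by
  rw [dblTerm]
  have h1 : (∏ j, (qPoch q (b j) (n j) / qPoch q q (n j) * (q ^ (∑ i, m i) * y j) ^ n j))
      = (∏ j, qPoch q (b j) (n j) / qPoch q q (n j) * y j ^ n j) *
        ∏ j, (q ^ (∑ i, m i)) ^ n j := by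
    rw [← Finset.prod_mul_distrib]
    exact Finset.prod_congr rfl fun j _ => by rw [mul_pow]; ring
  rw [h1, Finset.prod_pow_eq_pow_sum, ← pow_mul, ← Finset.prod_mul_distrib]
  ring

lemma keyEval (M N : ℕ) (q : ℂ) (x a : Fin M → ℂ) (y b : Fin N → ℂ)
    (hq : ‖q‖ < 1)
    (hx : ∀ i, ‖x i‖ < 1) (hy : ∀ j, ‖y j‖ < 1)
    (hby : ∀ j n, qPoch q (b j * y j) n ≠ 0)
    (hy0 : ∀ j k, 1 - q ^ k * y j ≠ 0)
    (hG : Summable (dblTerm q x a y b)) :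
    qHyperF q y a (fun j => b j * y j) x
      = (∏ j, qPochInf q (y j) / qPochInf q (b j * y j)) *
          ∑' p : (Fin M → ℕ) × (Fin N → ℕ), dblTerm q x a y b p := by
  set R : ℂ := ∏ j, qPochInf q (y j) / qPochInf q (b j * y j) with hR
  have hby0 : ∀ j k, 1 - q ^ k * (b j * y j) ≠ 0 := fun j => poch_factor_ne_zero (hby j)
  have hterm : ∀ m : Fin M → ℕ,
      (∏ j, qPoch q (y j) (∑ i, m i) / qPoch q (b j * y j) (∑ i, m i)) *
        (∏ i, qPoch q (a i) (m i) / qPoch q q (m i)) * (∏ i, x i ^ m i)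
      = R * ∑' n : Fin N → ℕ, dblTerm q x a y b (m, n) := by
    intro m
    set s : ℕ := ∑ i, m i with hs
    -- the one-variable q-binomial evaluation for each j
    have hratio : ∀ j, qPoch q (y j) s / qPoch q (b j * y j) s
        = (qPochInf q (y j) / qPochInf q (b j * y j)) *
            ∑' n : ℕ, qPoch q (b j) n / qPoch q q n * (q ^ s * y j) ^ n := by
      intro j
      have hsplit1 := qPochInf_split hq (y j) (hy0 j) s
      have hsplit2 := qPochInf_split hq (b j * y j) (hby0 j) s
      have hbin := qbinom hq (b j) (q ^ s * y j) (norm_qs_lt_one hq (hy j) s)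
        (shift_ne_zero (hy0 j) s)
      have harg : qPochInf q (b j * (q ^ s * y j)) = qPochInf q (q ^ s * (b j * y j)) := by
        rw [qPochInf]
        exact tprod_congr fun k => by ring_nf
      rw [hbin, harg]
      have h1 : qPochInf q (q ^ s * y j) ≠ 0 :=
        qPochInf_ne_zero hq _ (shift_ne_zero (hy0 j) s)
      have h2 : qPochInf q (q ^ s * (b j * y j)) ≠ 0 :=
        qPochInf_ne_zero hq _ (shift_ne_zero (hby0 j) s)
      have h3 : qPochInf q (b j * y j) ≠ 0 := qPochInf_ne_zero hq _ (hby0 j)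
      have h4 : qPoch q (b j * y j) s ≠ 0 := hby j s
      rw [hsplit1, hsplit2]
      generalize qPochInf q (q ^ s * y j) = A at h1 ⊢
      generalize qPochInf q (q ^ s * (b j * y j)) = B at h2 ⊢
      field_simp
    have hf : ∀ j : Fin N, Summable fun n : ℕ =>
        ‖qPoch q (b j) n / qPoch q q n * (q ^ s * y j) ^ n‖ :=
      fun j => summable_norm_coeff_mul_pow hq (b j) _ (norm_qs_lt_one hq (hy j) s)
    calc (∏ j, qPoch q (y j) s / qPoch q (b j * y j) s) *
          (∏ i, qPoch q (a i) (m i) / qPoch q q (m i)) * (∏ i, x i ^ m i)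
        = (∏ j, (qPochInf q (y j) / qPochInf q (b j * y j)) *
              ∑' n : ℕ, qPoch q (b j) n / qPoch q q n * (q ^ s * y j) ^ n) *
            (∏ i, qPoch q (a i) (m i) / qPoch q q (m i)) * (∏ i, x i ^ m i) := by
          rw [Finset.prod_congr rfl fun j _ => hratio j]
      _ = R * ((∏ i, qPoch q (a i) (m i) / qPoch q q (m i)) * (∏ i, x i ^ m i) *
            ∏ j, ∑' n : ℕ, qPoch q (b j) n / qPoch q q n * (q ^ s * y j) ^ n) := by
          rw [Finset.prod_mul_distrib, hR]; ring
      _ = R * ((∏ i, qPoch q (a i) (m i) / qPoch q q (m i)) * (∏ i, x i ^ m i) *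
            ∑' n : Fin N → ℕ, ∏ j, (qPoch q (b j) (n j) / qPoch q q (n j) *
              (q ^ s * y j) ^ n j)) := by
          rw [tsum_pi_prod (fun j => fun n : ℕ =>
            qPoch q (b j) n / qPoch q q n * (q ^ s * y j) ^ n) hf]
      _ = R * ∑' n : Fin N → ℕ, ((∏ i, qPoch q (a i) (m i) / qPoch q q (m i)) *
            (∏ i, x i ^ m i) * ∏ j, (qPoch q (b j) (n j) / qPoch q q (n j) *
              (q ^ s * y j) ^ n j)) := by
          rw [← tsum_mul_left]
      _ = R * ∑' n : Fin N → ℕ, dblTerm q x a y b (m, n) := by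
          rw [tsum_congr fun n => pointwise q x a y b m n]
  rw [qHyperF]
  rw [tsum_congr hterm, tsum_mul_left, ← Summable.tsum_prod hG]


lemma dblTerm_swap (q : ℂ) {M N : ℕ} (x a : Fin M → ℂ) (y b : Fin N → ℂ)
    (p : (Fin M → ℕ) × (Fin N → ℕ)) :
    dblTerm q y b x a (p.2, p.1) = dblTerm q x a y b p := by
  rw [dblTerm, dblTerm]
  rw [Nat.mul_comm (∑ j, p.2 j) (∑ i, p.1 i)]
  ring

end QAux

theorem statement2 (M N : ℕ) (q : ℂ) (x a : Fin M → ℂ) (y b : Fin N → ℂ)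
    (hq : ‖q‖ < 1)
    (hx : ∀ i, ‖x i‖ < 1) (hy : ∀ j, ‖y j‖ < 1)
    (hby : ∀ j n, qPoch q (b j * y j) n ≠ 0)
    (hax : ∀ i n, qPoch q (a i * x i) n ≠ 0)
    (hxinf : ∀ i, qPochInf q (x i) ≠ 0)
    (hyinf : ∀ j, qPochInf q (y j) ≠ 0)
    (hsum : Summable (fun p : (Fin M → ℕ) × (Fin N → ℕ) =>
      ‖(∏ i, qPoch q (a i) (p.1 i) / qPoch q q (p.1 i) * x i ^ p.1 i) *
        (∏ j, qPoch q (b j) (p.2 j) / qPoch q q (p.2 j) * y j ^ p.2 j) *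
        q ^ ((∑ i, p.1 i) * (∑ j, p.2 j))‖)) :
    qHyperF q y a (fun j => b j * y j) x
      = ((∏ j, qPochInf q (y j)) * ∏ i, qPochInf q (a i * x i)) /
          ((∏ j, qPochInf q (b j * y j)) * ∏ i, qPochInf q (x i)) *
        qHyperF q x b (fun i => a i * x i) y := by
  have hq' : ‖q‖ < 1 := hq
  have hx' : ∀ i, ‖x i‖ < 1 := hx
  have hy' : ∀ j, ‖y j‖ < 1 := hy
  have hy0 : ∀ j k, 1 - q ^ k * y j ≠ 0 := fun j => QAux.factor_ne_zero (hyinf j)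
  have hx0 : ∀ i k, 1 - q ^ k * x i ≠ 0 := fun i => QAux.factor_ne_zero (hxinf i)
  have hG : Summable (QAux.dblTerm q x a y b) := by
    have hsum' : Summable (fun p : (Fin M → ℕ) × (Fin N → ℕ) =>
        ‖QAux.dblTerm q x a y b p‖) := by
      refine hsum.congr fun p => ?_
      rw [QAux.dblTerm]
    exact hsum'.of_norm
  have hG' : Summable (QAux.dblTerm q y b x a) := by
    have h := (Equiv.prodComm (Fin N → ℕ) (Fin M → ℕ)).summable_iff.2 hG
    refine h.congr fun p' => ?_
    exact QAux.dblTerm_swap q y b x a p'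
  have h1 := QAux.keyEval M N q x a y b hq' hx' hy' hby hy0 hG
  have h2 := QAux.keyEval N M q y b x a hq' hy' hx' hax hx0 hG'
  have hswap : (∑' p' : (Fin N → ℕ) × (Fin M → ℕ), QAux.dblTerm q y b x a p')
      = ∑' p : (Fin M → ℕ) × (Fin N → ℕ), QAux.dblTerm q x a y b p := by
    rw [← (Equiv.prodComm (Fin M → ℕ) (Fin N → ℕ)).tsum_eq (QAux.dblTerm q y b x a)]
    refine tsum_congr fun p => ?_
    exact QAux.dblTerm_swap q x a y b p
  rw [h1, h2, hswap]
  have hbyne : ∀ j, qPochInf q (b j * y j) ≠ 0 := fun j =>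
    QAux.qPochInf_ne_zero hq' _ (QAux.poch_factor_ne_zero (hby j))
  have haxne : ∀ i, qPochInf q (a i * x i) ≠ 0 := fun i =>
    QAux.qPochInf_ne_zero hq' _ (QAux.poch_factor_ne_zero (hax i))
  have hbyne' : (∏ j, qPochInf q (b j * y j)) ≠ 0 :=
    Finset.prod_ne_zero_iff.2 fun j _ => hbyne j
  have haxne' : (∏ i, qPochInf q (a i * x i)) ≠ 0 :=
    Finset.prod_ne_zero_iff.2 fun i _ => haxne i
  have hxne' : (∏ i, qPochInf q (x i)) ≠ 0 :=
    Finset.prod_ne_zero_iff.2 fun i _ => hxinf i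
  rw [Finset.prod_div_distrib, Finset.prod_div_distrib]
  field_simp
end

section
/- Action of the exchange operator σ_i on p_{1,i} (first component of Proposition 3.1): let K be a field (e.g. ℂ), let u, x_0, x_1, …, x_M, a_1, …, a_M ∈ K, fix 1 ≤ i ≤ M−1, and assume 1 − a_k x_k u ≠ 0 for 1 ≤ k ≤ i+1 and x_i − a_{i+1} x_{i+1} ≠ 0. Define p_{1,k}(u) = ((1 − x_0 u)/(1 − a_k x_k u)) · ∏_{l=1}^{k-1} (1 − x_l u)/(1 − a_l x_l u). Then the function obtained from p_{1,i} by exchanging (x_i, a_i) with (x_{i+1}, a_{i+1}), namely σ_i(p_{1,i})(u) = ((1 − x_0 u)/(1 − a_{i+1} x_{i+1} u)) · ∏_{l=1}^{i-1} (1 − x_l u)/(1 − a_l x_l u), satisfies (x_i − a_{i+1} x_{i+1}) · σ_i(p_{1,i})(u) = (1 − a_i) x_i · p_{1,i}(u) + (a_i x_i − a_{i+1} x_{i+1}) · p_{1,i+1}(u). -/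
open scoped BigOperators

/-- The rational function `p_{1,k}(u) = ((1 - x_0 u)/(1 - a_k x_k u)) ·
∏_{l=1}^{k-1} (1 - x_l u)/(1 - a_l x_l u)`. -/
def pOne {K : Type*} [Field K] (x a : ℕ → K) (k : ℕ) (u : K) : K :=
  (1 - x 0 * u) / (1 - a k * x k * u) *
    ∏ l ∈ Finset.Ico 1 k, (1 - x l * u) / (1 - a l * x l * u)

theorem statement7 {K : Type*} [Field K] (M : ℕ) (u : K) (x a : ℕ → K)
    (i : ℕ) (hi1 : 1 ≤ i) (hiM : i + 1 ≤ M)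
    (hden : ∀ k, 1 ≤ k → k ≤ i + 1 → 1 - a k * x k * u ≠ 0)
    (hx : x i - a (i + 1) * x (i + 1) ≠ 0) :
    (x i - a (i + 1) * x (i + 1)) *
        ((1 - x 0 * u) / (1 - a (i + 1) * x (i + 1) * u) *
          ∏ l ∈ Finset.Ico 1 i, (1 - x l * u) / (1 - a l * x l * u))
      = (1 - a i) * x i * pOne x a i u +
        (a i * x i - a (i + 1) * x (i + 1)) * pOne x a (i + 1) u := by
  have hDi := hden i hi1 (by omega)
  have hDi1 := hden (i + 1) (by omega) le_rfl
  unfold pOne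
  rw [Finset.prod_Ico_succ_top hi1]
  set P := ∏ l ∈ Finset.Ico 1 i, (1 - x l * u) / (1 - a l * x l * u)
  have hDi' : 1 - x i * u * a i ≠ 0 := by rwa [show x i * u * a i = a i * x i * u by ring]
  field_simp
  ring
end

section
/- Action of the exchange operator σ_i on p_{1,i+1} (second component of Proposition 3.1): let K be a field (e.g. ℂ), let u, x_0, x_1, …, x_M, a_1, …, a_M ∈ K, fix 1 ≤ i ≤ M−1, and assume 1 − a_k x_k u ≠ 0 for 1 ≤ k ≤ i+1 and x_i − a_{i+1} x_{i+1} ≠ 0. Define p_{1,k}(u) = ((1 − x_0 u)/(1 − a_k x_k u)) · ∏_{l=1}^{k-1} (1 − x_l u)/(1 − a_l x_l u). Then the function obtained from p_{1,i+1} by exchanging (x_i, a_i) with (x_{i+1}, a_{i+1}), namely σ_i(p_{1,i+1})(u) = ((1 − x_0 u)(1 − x_{i+1} u)/((1 − a_i x_i u)(1 − a_{i+1} x_{i+1} u))) · ∏_{l=1}^{i-1} (1 − x_l u)/(1 − a_l x_l u), satisfies (x_i − a_{i+1} x_{i+1}) · σ_i(p_{1,i+1})(u) = (x_i − x_{i+1})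 · p_{1,i}(u) + (1 − a_{i+1}) x_{i+1} · p_{1,i+1}(u). -/
open scoped BigOperators

theorem statement8 {K : Type*} [Field K] (M : ℕ) (u : K) (x a : ℕ → K)
    (i : ℕ) (hi1 : 1 ≤ i) (hiM : i + 1 ≤ M)
    (hden : ∀ k, 1 ≤ k → k ≤ i + 1 → 1 - a k * x k * u ≠ 0)
    (hx : x i - a (i + 1) * x (i + 1) ≠ 0) :
    (x i - a (i + 1) * x (i + 1)) *
        ((1 - x 0 * u) * (1 - x (i + 1) * u) /
            ((1 - a i * x i * u) * (1 - a (i + 1) * x (i + 1) * u)) *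
          ∏ l ∈ Finset.Ico 1 i, (1 - x l * u) / (1 - a l * x l * u))
      = (x i - x (i + 1)) * pOne x a i u +
        (1 - a (i + 1)) * x (i + 1) * pOne x a (i + 1) u := by
  have hA := hden i hi1 (Nat.le_succ i)
  have hB := hden (i+1) (hi1.trans (Nat.le_succ i)) le_rfl
  unfold pOne
  rw [Finset.prod_Ico_succ_top hi1]
  set P := ∏ l ∈ Finset.Ico 1 i, (1 - x l * u) / (1 - a l * x l * u) with hP
  have key : (x i - a (i+1) * x (i+1)) *
      ((1 - x 0 * u) * (1 - x (i+1) * u) /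
        ((1 - a i * x i * u) * (1 - a (i+1) * x (i+1) * u)))
      = (x i - x (i+1)) * ((1 - x 0 * u) / (1 - a i * x i * u)) +
        (1 - a (i+1)) * x (i+1) *
          ((1 - x 0 * u) / (1 - a (i+1) * x (i+1) * u) *
            ((1 - x i * u) / (1 - a i * x i * u))) := by
    field_simp
    ring
  linear_combination P * key
end

section
/- Factorization identity of Proposition 4.4 (the shape of the Lax matrices): let K be a field and q, κ, t, x_0, a, r ∈ K with κ ≠ 0 (κ plays the role of q^{−γ_1}, a = a_{M−1}, t = x_{M−1}, r = r_{M−1}). Set N = (1 − a t) r + x_0 − 1 and D = ((1 − a) r − 1) t + x_0, and assume N ≠ 0, D ≠ 0, (x_0 − 1) + r t (1 − a) ≠ 0, r ≠ 0, t ≠ 0. Define u = (t(1 − a)N + (x_0 − 1)D) / (κ N ((x_0 − 1) + r t (1 − a))) and p = κ N u / D, and assume u ≠ 0 and p ≠ 0. Then for every z ∈ K with t − z ≠ 0 and x_0 − z ≠ 0: [[1/r,1],[z, r t]]^{-1} [[1/r,1],[z, a r t]] · [[1,1],[z,x_0]]^{-1} [[1,1],[z,1]] · [[1,0],[0,κ]]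 = [[p,1],[z, x_0/p]]^{-1} [[p,1],[z, 1/p]] · [[1,0],[0,κ]] · [[u,1],[z, t/u]]^{-1} [[u,1],[z, a t/u]]. In particular u is independent of z, and p = κ((1 − a t) r + x_0 − 1) u / ((−1 + (1 − a) r) t + x_0). -/
open scoped Matrix

lemma statement15_inv2s {K : Type*} [Field K] (a b c d Δ : K) (hd : a*d - b*c = Δ) (h : Δ ≠ 0) :
    (!![a,b;c,d])⁻¹ = Δ⁻¹ • !![d,-b;-c,a] := by
  subst hd
  rw [Matrix.inv_def, Matrix.adjugate_fin_two, Matrix.det_fin_two_of, Ring.inverse_eq_inv']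
  congr 1

set_option maxHeartbeats 6000000 in
set_option maxRecDepth 20000 in
theorem statement15 {K : Type*} [Field K] (q κ t x0 a r u p : K)
    (hκ : κ ≠ 0)
    (hN : (1 - a * t) * r + x0 - 1 ≠ 0)
    (hD : ((1 - a) * r - 1) * t + x0 ≠ 0)
    (hE : (x0 - 1) + r * t * (1 - a) ≠ 0)
    (hr : r ≠ 0) (ht : t ≠ 0)
    (hu_def : u = (t * (1 - a) * ((1 - a * t) * r + x0 - 1) +
        (x0 - 1) * (((1 - a) * r - 1) * t + x0)) /
      (κ * ((1 - a * t) * r + x0 - 1) * ((x0 - 1) + r * t * (1 - a))))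
    (hp_def : p = κ * ((1 - a * t) * r + x0 - 1) * u / (((1 - a) * r - 1) * t + x0))
    (hu : u ≠ 0) (hp : p ≠ 0)
    (z : K) (htz : t - z ≠ 0) (hx0z : x0 - z ≠ 0) :
    (!![1 / r, 1; z, r * t])⁻¹ * !![1 / r, 1; z, a * r * t] *
        ((!![1, 1; z, x0])⁻¹ * !![1, 1; z, 1]) * !![1, 0; 0, κ]
      = (!![p, 1; z, x0 / p])⁻¹ * !![p, 1; z, 1 / p] * !![1, 0; 0, κ] *
          ((!![u, 1; z, t / u])⁻¹ * !![u, 1; z, a * t / u]) := by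
  have hU : κ * ((1 - a * t) * r + x0 - 1) * ((x0 - 1) + r * t * (1 - a)) * u
      = t * (1 - a) * ((1 - a * t) * r + x0 - 1) + (x0 - 1) * (((1 - a) * r - 1) * t + x0) := by
    rw [hu_def]; field_simp
    rw [mul_div_cancel_left₀]; convert hE using 2; ring
  have hP : p * (((1 - a) * r - 1) * t + x0) = κ * ((1 - a * t) * r + x0 - 1) * u := by
    rw [hp_def]; field_simp
    rw [div_self]; convert hD using 2; ring
  have e1 : (1/r) * (r*t) - 1 * z = t - z := by field_simp
  have e2 : (1:K) * x0 - 1 * z = x0 - z := by ring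
  have e3 : p * (x0/p) - 1 * z = x0 - z := by field_simp
  have e4 : u * (t/u) - 1 * z = t - z := by field_simp
  rw [statement15_inv2s _ _ _ _ _ e1 htz, statement15_inv2s _ _ _ _ _ e2 hx0z,
    statement15_inv2s _ _ _ _ _ e3 hx0z, statement15_inv2s _ _ _ _ _ e4 htz]
  simp only [Matrix.smul_mul, Matrix.mul_smul, smul_smul]
  rw [mul_comm ((x0-z)⁻¹) ((t-z)⁻¹)]
  congr 1
  repeat rw [Matrix.mul_fin_two]
  ext i j
  fin_cases i <;> fin_cases j <;>
    simp only [Fin.zero_eta, Fin.mk_one, Matrix.cons_val', Matrix.cons_val_zero, Matrix.cons_val_one, Matrix.head_cons,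
      Matrix.empty_val', Matrix.cons_val_fin_one, Matrix.of_apply] <;>
    field_simp
  any_goals ring
  apply mul_left_cancel₀ (mul_ne_zero hD (mul_ne_zero (mul_ne_zero hκ hN) hE))
  linear_combination ((κ*t*z - κ*t*r*z - κ*t*a*z + κ*t*a*r*z - κ*t*x0 - 2*κ*t*x0*z + κ*t*x0*r + κ*t*x0*r*z + κ*t*x0*a + 2*κ*t*x0*a*z - κ*t*x0*a*r - κ*t*x0*a*r*z + 2*κ*t*x0^2 + κ*t*x0^2*z - κ*t*x0^2*r - 2*κ*t*x0^2*a - κ*t*x0^2*a*z + κ*t*x0^2*a*r - κ*t*x0^3 + κ*t*x0^3*a - κ*t^2*r*z + κ*t^2*r^2*z + 3*κ*t^2*a*r*z - 2*κ*t^2*a*r^2*z - 2*κ*t^2*a^2*r*z + κ*t^2*a^2*r^2*z + κ*t^2*x0*r + κ*t^2*x0*r*z - κ*t^2*x0*r^2 - 3*κ*t^2*x0*a*r - 3*κ*t^2*x0*a*r*z + 2*κ*t^2*x0*a*r^2 + 2*κ*t^2*x0*a^2*r + 2*κ*t^2*x0*a^2*r*z - κ*t^2*x0*a^2*r^2 -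 κ*t^2*x0^2*r + 3*κ*t^2*x0^2*a*r - 2*κ*t^2*x0^2*a^2*r - κ*t^3*a*r^2*z + 2*κ*t^3*a^2*r^2*z - κ*t^3*a^3*r^2*z + κ*t^3*x0*a*r^2 - 2*κ*t^3*x0*a^2*r^2 + κ*t^3*x0*a^3*r^2 + κ^2*z*u - κ^2*r*z*u - 3*κ^2*x0*z*u + 2*κ^2*x0*r*z*u + 3*κ^2*x0^2*z*u - κ^2*x0^2*r*z*u - κ^2*x0^3*z*u - κ^2*t*u + 2*κ^2*t*r*u - 2*κ^2*t*r*z*u - κ^2*t*r^2*u + 2*κ^2*t*r^2*z*u - κ^2*t*a*r*u + 3*κ^2*t*a*r*z*u + κ^2*t*a*r^2*u - 2*κ^2*t*a*r^2*z*u + 3*κ^2*t*x0*u - 4*κ^2*t*x0*r*u + 4*κ^2*t*x0*r*z*u + κ^2*t*x0*r^2*u - 2*κ^2*t*x0*r^2*z*u + 2*κ^2*t*x0*a*r*u - 6*κ^2*t*x0*a*r*z*u - κ^2*t*x0*a*r^2*u + 2*κ^2*t*x0*a*r^2*z*u - 3*κ^2*t*x0^2*u + 2*κ^2*t*x0^2*r*u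 - 2*κ^2*t*x0^2*r*z*u - κ^2*t*x0^2*a*r*u + 3*κ^2*t*x0^2*a*r*z*u + κ^2*t*x0^3*u + κ^2*t^2*r*u - 2*κ^2*t^2*r^2*u + κ^2*t^2*r^2*z*u + κ^2*t^2*r^3*u - κ^2*t^2*r^3*z*u - 2*κ^2*t^2*a*r*u + 4*κ^2*t^2*a*r^2*u - 4*κ^2*t^2*a*r^2*z*u - 2*κ^2*t^2*a*r^3*u + 2*κ^2*t^2*a*r^3*z*u - 2*κ^2*t^2*a^2*r^2*u + 3*κ^2*t^2*a^2*r^2*z*u + κ^2*t^2*a^2*r^3*u - κ^2*t^2*a^2*r^3*z*u - 2*κ^2*t^2*x0*r*u + 2*κ^2*t^2*x0*r^2*u - κ^2*t^2*x0*r^2*z*u + 4*κ^2*t^2*x0*a*r*u - 4*κ^2*t^2*x0*a*r^2*u + 4*κ^2*t^2*x0*a*r^2*z*u + 2*κ^2*t^2*x0*a^2*r^2*u - 3*κ^2*t^2*x0*a^2*r^2*z*u + κ^2*t^2*x0^2*r*u - 2*κ^2*t^2*x0^2*a*r*u + κ^2*t^3*a*r^2*u - κ^2*t^3*a*r^3*u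 + κ^2*t^3*a*r^3*z*u - κ^2*t^3*a^2*r^2*u + 2*κ^2*t^3*a^2*r^3*u - 2*κ^2*t^3*a^2*r^3*z*u - κ^2*t^3*a^3*r^3*u + κ^2*t^3*a^3*r^3*z*u - κ^2*t^3*x0*a*r^2*u + κ^2*t^3*x0*a^2*r^2*u) * hP + (-κ^2*z*u + κ^2*r*z*u + 2*κ^2*x0*z*u - κ^2*x0*r*z*u - κ^2*x0^2*z*u + κ^2*t*u - 2*κ^2*t*r*u + κ^2*t*r*z*u + κ^2*t*r^2*u - κ^2*t*r^2*z*u + κ^2*t*a*r*u - 2*κ^2*t*a*r*z*u - κ^2*t*a*r^2*u + κ^2*t*a*r^2*z*u - 2*κ^2*t*x0*u + 2*κ^2*t*x0*r*u - κ^2*t*x0*r*z*u - κ^2*t*x0*a*r*u + 2*κ^2*t*x0*a*r*z*u + κ^2*t*x0^2*u + κ^2*t^2*a*r*u - κ^2*t^2*a*r^2*u + κ^2*t^2*a*r^2*z*u + κ^2*t^2*a^2*r^2*u - κ^2*t^2*a^2*r^2*z*u - κ^2*t^2*x0*a*r*u) * hU)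
end

section
/- First elementary matrix move in the proof of Proposition 4.1 (exchange of X_k X_l^{-1} into X'_l{}^{-1} X'_k, stated in cross-multiplied form): let K be a field, and let z, u_k, u_l, c_k, c_l ∈ K with u_k ≠ 0, u_l ≠ 0, u_k ≠ u_l, and c_k u_l − c_l u_k ≠ 0. Define u'_k = (c_k u_l − c_l u_k)/((u_k − u_l) u_l) and u'_l = (c_k u_l − c_l u_k)/((u_k − u_l) u_k). Then [[u'_l, 1],[z, c_l/u'_l]] · [[u_k, 1],[z, c_k/u_k]] = [[u'_k, 1],[z, c_k/u'_k]] · [[u_l, 1],[z, c_l/u_l]]; equivalently, whenever the relevant determinants are nonzero, [[u_k,1],[z,c_k/u_k]] · [[u_l,1],[z,c_l/u_l]]^{-1} = [[u'_l,1],[z,c_l/u'_l]]^{-1} · [[u'_k,1],[z,c_k/u'_k]]. -/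
open scoped Matrix

theorem statement16 {K : Type*} [Field K] (z uk ul ck cl : K)
    (huk : uk ≠ 0) (hul : ul ≠ 0) (hne : uk ≠ ul)
    (hc : ck * ul - cl * uk ≠ 0) :
    (!![(ck * ul - cl * uk) / ((uk - ul) * uk), 1;
          z, cl / ((ck * ul - cl * uk) / ((uk - ul) * uk))] *
        !![uk, 1; z, ck / uk]
      = !![(ck * ul - cl * uk) / ((uk - ul) * ul), 1;
            z, ck / ((ck * ul - cl * uk) / ((uk - ul) * ul))] *
          !![ul, 1; z, cl / ul]) ∧
    (cl - z ≠ 0 →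
      !![uk, 1; z, ck / uk] * (!![ul, 1; z, cl / ul])⁻¹
        = (!![(ck * ul - cl * uk) / ((uk - ul) * uk), 1;
              z, cl / ((ck * ul - cl * uk) / ((uk - ul) * uk))])⁻¹ *
            !![(ck * ul - cl * uk) / ((uk - ul) * ul), 1;
              z, ck / ((ck * ul - cl * uk) / ((uk - ul) * ul))]) := by
  have hsub : uk - ul ≠ 0 := sub_ne_zero.mpr hne
  have h1 :
      !![(ck * ul - cl * uk) / ((uk - ul) * uk), 1;
          z, cl / ((ck * ul - cl * uk) / ((uk - ul) * uk))] *
        !![uk, 1; z, ck / uk]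
      = !![(ck * ul - cl * uk) / ((uk - ul) * ul), 1;
            z, ck / ((ck * ul - cl * uk) / ((uk - ul) * ul))] *
          !![ul, 1; z, cl / ul] := by
    have hc' : ck * ul - uk * cl ≠ 0 := by intro h; apply hc; linear_combination h
    ext i j
    fin_cases i <;> fin_cases j <;>
      simp [Matrix.mul_apply, Fin.sum_univ_succ] <;>
      field_simp <;> ring
  refine ⟨h1, fun hd => ?_⟩
  set A := !![(ck * ul - cl * uk) / ((uk - ul) * uk), 1;
          z, cl / ((ck * ul - cl * uk) / ((uk - ul) * uk))]
  set B := !![(ck * ul - cl * uk) / ((uk - ul) * ul), 1;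
            z, ck / ((ck * ul - cl * uk) / ((uk - ul) * ul))]
  set Xk := !![uk, 1; z, ck / uk]
  set Xl := !![ul, 1; z, cl / ul]
  have hdA : A.det = cl - z := by
    simp only [A, Matrix.det_fin_two_of]
    field_simp
  have hdXl : Xl.det = cl - z := by
    simp only [Xl, Matrix.det_fin_two_of]
    field_simp
  have hA : IsUnit A.det := by rw [hdA]; exact isUnit_iff_ne_zero.mpr hd
  have hXl : IsUnit Xl.det := by rw [hdXl]; exact isUnit_iff_ne_zero.mpr hd
  calc Xk * Xl⁻¹ = A⁻¹ * (A * Xk) * Xl⁻¹ := by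
        rw [← Matrix.mul_assoc, Matrix.nonsing_inv_mul A hA, Matrix.one_mul]
    _ = A⁻¹ * (B * Xl) * Xl⁻¹ := by rw [h1]
    _ = A⁻¹ * B := by
        rw [Matrix.mul_assoc, Matrix.mul_assoc, Matrix.mul_nonsing_inv Xl hXl,
          Matrix.mul_one]
end

section
/- Second elementary matrix move in the proof of Proposition 4.1 (exchange of X_k X_l into X'_l X'_k): let K be a field, and let z, u_k, u_l, c_k, c_l ∈ K with u_k ≠ 0, u_l ≠ 0, c_l + u_k u_l ≠ 0, and c_k + u_k u_l ≠ 0. Define u'_k = u_l (c_k + u_k u_l)/(c_l + u_k u_l) and u'_l = u_k (c_l + u_k u_l)/(c_k + u_k u_l) (both nonzero). Then [[u_k, 1],[z, c_k/u_k]] · [[u_l, 1],[z, c_l/u_l]] = [[u'_l, 1],[z, c_l/u'_l]] · [[u'_k, 1],[z, c_k/u'_k]]. -/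
open scoped Matrix

theorem statement17 {K : Type*} [Field K] (z uk ul ck cl : K)
    (huk : uk ≠ 0) (hul : ul ≠ 0)
    (hl : cl + uk * ul ≠ 0) (hk : ck + uk * ul ≠ 0) :
    !![uk, 1; z, ck / uk] * !![ul, 1; z, cl / ul]
      = !![uk * (cl + uk * ul) / (ck + uk * ul), 1;
            z, cl / (uk * (cl + uk * ul) / (ck + uk * ul))] *
          !![ul * (ck + uk * ul) / (cl + uk * ul), 1;
            z, ck / (ul * (ck + uk * ul) / (cl + uk * ul))] := by
  have hl' : cl + ul * uk ≠ 0 := by rwa [mul_comm]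
  ext i j
  fin_cases i <;> fin_cases j <;>
    simp [Matrix.mul_apply, Fin.sum_univ_succ] <;>
    field_simp <;> ring
end
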